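/- arXiv:1104.1101 — 7 statements merged into one kernel-verified Lean document; each statement's English description precedes it below -/
import Mathlib

section
/- For every R > 0 and every natural number N ≥ 1, the function k(R) = N·(∫₀ᴿ e^{-s²/2} s^{N-1} ds)/(∫₀ᴿ e^{-s²/2} s^{N+1} ds) is strictly decreasing in R. -/
open Real intervalIntegral

private lemma k_cont (m : ℕ) : Continuous (fun s : ℝ => Real.exp (-s ^ 2 / 2) * s ^ m) := by
  exact (Real.continuous_exp.comp (by continuity)).mul (continuous_pow m)

private lemma k_pos (m : ℕ) {a b : ℝ} (hab : a < b) (ha : 0 ≤ a) :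
    0 < ∫ s in a..b, Real.exp (-s ^ 2 / 2) * s ^ m := by
  apply intervalIntegral.intervalIntegral_pos_of_pos_on
    ((k_cont m).intervalIntegrable a b) _ hab
  intro x hx
  have hx0 : 0 < x := lt_of_le_of_lt ha hx.1
  positivity

/-- key pointwise rewrite: s^(N+1) = s^2 * s^(N-1) for N ≥ 1 -/
private lemma pow_split (N : ℕ) (hN : 1 ≤ N) (s : ℝ) : s ^ (N + 1) = s ^ 2 * s ^ (N - 1) := by
  rw [← pow_add]
  congr 1
  omega

/-- For every natural number `N ≥ 1`, the function
`k(R) = N · (∫₀ᴿ e^{-s²/2} s^{N-1} ds) / (∫₀ᴿ e^{-s²/2} s^{N+1} ds)`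
is strictly decreasing on `(0, ∞)`. -/
theorem strictAntiOn_k (N : ℕ) (hN : 1 ≤ N) :
    StrictAntiOn
      (fun R : ℝ =>
        (N : ℝ) * (∫ s in (0:ℝ)..R, Real.exp (-s ^ 2 / 2) * s ^ (N - 1)) /
          (∫ s in (0:ℝ)..R, Real.exp (-s ^ 2 / 2) * s ^ (N + 1)))
      (Set.Ioi 0) := by
  intro a ha b hb hab
  simp only [Set.mem_Ioi] at ha hb
  set f : ℝ → ℝ := fun s => Real.exp (-s ^ 2 / 2) * s ^ (N - 1) with hf
  set g : ℝ → ℝ := fun s => Real.exp (-s ^ 2 / 2) * s ^ (N + 1) with hg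
  have hfa : 0 < ∫ s in (0:ℝ)..a, f s := k_pos _ ha le_rfl
  have hga : 0 < ∫ s in (0:ℝ)..a, g s := k_pos _ ha le_rfl
  have hgb : 0 < ∫ s in (0:ℝ)..b, g s := k_pos _ (ha.trans hab) le_rfl
  have hF : 0 < ∫ s in a..b, f s := k_pos _ hab ha.le
  have hG : 0 < ∫ s in a..b, g s := k_pos _ hab ha.le
  -- split integrals
  have hfb : (∫ s in (0:ℝ)..b, f s) = (∫ s in (0:ℝ)..a, f s) + ∫ s in a..b, f s :=
    (intervalIntegral.integral_add_adjacent_intervals ((k_cont _).intervalIntegrable 0 a)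
      ((k_cont _).intervalIntegrable a b)).symm
  have hgbsplit : (∫ s in (0:ℝ)..b, g s) = (∫ s in (0:ℝ)..a, g s) + ∫ s in a..b, g s :=
    (intervalIntegral.integral_add_adjacent_intervals ((k_cont _).intervalIntegrable 0 a)
      ((k_cont _).intervalIntegrable a b)).symm
  -- key inequality 1 : ∫₀ᵃ g < a² ∫₀ᵃ f  (strict)
  have key1 : (∫ s in (0:ℝ)..a, g s) < a ^ 2 * ∫ s in (0:ℝ)..a, f s := by
    rw [← intervalIntegral.integral_const_mul]
    apply intervalIntegral.integral_lt_integral_of_continuousOn_of_le_of_exists_lt ha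
      (k_cont (N + 1)).continuousOn (continuous_const.mul (k_cont (N - 1))).continuousOn
    · intro x hx
      have hx0 : 0 < x := hx.1
      rw [pow_split N hN x]
      have hxa : x ^ 2 ≤ a ^ 2 := by nlinarith [hx.2]
      have h1 : 0 < Real.exp (-x ^ 2 / 2) := Real.exp_pos _
      have h2 : (0:ℝ) ≤ x ^ (N - 1) := by positivity
      simp only [Pi.mul_apply]
      nlinarith [mul_le_mul_of_nonneg_right hxa (mul_nonneg h1.le h2)]
    · refine ⟨a / 2, ⟨by linarith, by linarith⟩, ?_⟩
      have hx0 : (0:ℝ) < a / 2 := by linarith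
      have h1 : 0 < Real.exp (-(a / 2) ^ 2 / 2) := Real.exp_pos _
      have h2 : (0:ℝ) < (a / 2) ^ (N - 1) := by positivity
      have hxa : (a / 2) ^ 2 < a ^ 2 := by nlinarith
      rw [pow_split N hN (a / 2)]
      simp only [Pi.mul_apply]
      nlinarith [mul_lt_mul_of_pos_right hxa (mul_pos h1 h2)]
  -- key inequality 2 : a² ∫ₐᵇ f ≤ ∫ₐᵇ g
  have key2 : a ^ 2 * (∫ s in a..b, f s) ≤ ∫ s in a..b, g s := by
    rw [← intervalIntegral.integral_const_mul]
    apply intervalIntegral.integral_mono_on hab.le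
      ((continuous_const.mul (k_cont (N - 1))).intervalIntegrable a b)
      ((k_cont (N + 1)).intervalIntegrable a b)
    intro x hx
    have hx0 : 0 ≤ x := ha.le.trans hx.1
    have hxa : a ^ 2 ≤ x ^ 2 := by nlinarith [hx.1]
    rw [pow_split N hN x]
    have h1 : 0 < Real.exp (-x ^ 2 / 2) := Real.exp_pos _
    have h2 : (0:ℝ) ≤ x ^ (N - 1) := by positivity
    simp only [Pi.mul_apply]
    nlinarith [mul_le_mul_of_nonneg_right hxa (mul_nonneg h1.le h2)]
  -- combine
  have hNpos : (0:ℝ) < N := by exact_mod_cast hN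
  rw [div_lt_div_iff₀ hgb hga]
  rw [hfb, hgbsplit]
  have main : (∫ s in a..b, f s) * (∫ s in (0:ℝ)..a, g s) <
      (∫ s in (0:ℝ)..a, f s) * (∫ s in a..b, g s) := by
    calc (∫ s in a..b, f s) * (∫ s in (0:ℝ)..a, g s)
        < (∫ s in a..b, f s) * (a ^ 2 * ∫ s in (0:ℝ)..a, f s) := by
          exact mul_lt_mul_of_pos_left key1 hF
      _ = (∫ s in (0:ℝ)..a, f s) * (a ^ 2 * ∫ s in a..b, f s) := by ring
      _ ≤ (∫ s in (0:ℝ)..a, f s) * (∫ s in a..b, g s) :=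
          mul_le_mul_of_nonneg_left key2 hfa.le
  nlinarith
end

section
/- For every natural number N ≥ 2, the quantity k(√(N-1)) = N·(∫₀^{√(N-1)} e^{-s²/2} s^{N-1} ds)/(∫₀^{√(N-1)} e^{-s²/2} s^{N+1} ds) satisfies k(√(N-1)) ≤ (2N+1)/(N-1). -/
open Real

/-- For every natural number `N ≥ 2`, the quantity
`k(√(N-1)) = N·(∫₀^{√(N-1)} e^{-s²/2} s^{N-1} ds)/(∫₀^{√(N-1)} e^{-s²/2} s^{N+1} ds)`
satisfies `k(√(N-1)) ≤ (2N+1)/(N-1)`. -/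
theorem k_sqrt_sub_one_le (N : ℕ) (hN : 2 ≤ N) :
    (N : ℝ) * (∫ s in (0:ℝ)..Real.sqrt ((N : ℝ) - 1), Real.exp (-s ^ 2 / 2) * s ^ (N - 1)) /
        (∫ s in (0:ℝ)..Real.sqrt ((N : ℝ) - 1), Real.exp (-s ^ 2 / 2) * s ^ (N + 1)) ≤
      (2 * (N : ℝ) + 1) / ((N : ℝ) - 1) := by
  have hN1 : (1:ℝ) ≤ (N:ℝ) - 1 := by
    have : (2:ℝ) ≤ (N:ℝ) := by exact_mod_cast hN
    linarith
  set R := Real.sqrt ((N : ℝ) - 1) with hRdef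
  have hR0 : 0 < R := Real.sqrt_pos.mpr (by linarith)
  have hR2 : R ^ 2 = (N : ℝ) - 1 := Real.sq_sqrt (by linarith)
  set I1 := ∫ s in (0:ℝ)..R, Real.exp (-s ^ 2 / 2) * s ^ (N - 1) with hI1
  set I2 := ∫ s in (0:ℝ)..R, Real.exp (-s ^ 2 / 2) * s ^ (N + 1) with hI2
  -- integrability
  have hcont : ∀ m : ℕ, Continuous fun s : ℝ => Real.exp (-s ^ 2 / 2) * s ^ m := by
    intro m; fun_prop
  have hint : ∀ m : ℕ, IntervalIntegrable (fun s : ℝ => Real.exp (-s ^ 2 / 2) * s ^ m)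
      MeasureTheory.volume 0 R := fun m => (hcont m).intervalIntegrable 0 R
  -- derivative
  have hderiv : ∀ s : ℝ, HasDerivAt (fun x : ℝ => -(x ^ N * Real.exp (-x ^ 2 / 2)))
      (Real.exp (-s ^ 2 / 2) * s ^ (N + 1) - (N : ℝ) * (Real.exp (-s ^ 2 / 2) * s ^ (N - 1))) s := by
    intro s
    have h1 : HasDerivAt (fun x : ℝ => x ^ N) ((N : ℝ) * s ^ (N - 1)) s := hasDerivAt_pow N s
    have h2 : HasDerivAt (fun x : ℝ => -x ^ 2 / 2) (-s) s := by
      have := ((hasDerivAt_pow 2 s).neg).div_const 2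
      exact this.congr_deriv (by norm_num; ring)
    have h3 : HasDerivAt (fun x : ℝ => Real.exp (-x ^ 2 / 2))
        (Real.exp (-s ^ 2 / 2) * (-s)) s := h2.exp
    have h4 := (h1.mul h3).neg
    exact h4.congr_deriv (by rw [pow_succ]; ring)
  have hFTC : I2 - (N : ℝ) * I1 = -(R ^ N * Real.exp (-R ^ 2 / 2)) := by
    have key := intervalIntegral.integral_eq_sub_of_hasDerivAt
      (f := fun x : ℝ => -(x ^ N * Real.exp (-x ^ 2 / 2)))
      (fun s _ => hderiv s)
      (((hint (N + 1)).sub ((hint (N - 1)).const_mul (N : ℝ))))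
    have hsplit : (∫ s in (0:ℝ)..R,
        (Real.exp (-s ^ 2 / 2) * s ^ (N + 1) - (N : ℝ) * (Real.exp (-s ^ 2 / 2) * s ^ (N - 1))))
        = I2 - (N : ℝ) * I1 := by
      rw [intervalIntegral.integral_sub (hint (N + 1)) ((hint (N - 1)).const_mul (N : ℝ)),
        intervalIntegral.integral_const_mul]
    rw [hsplit] at key
    rw [key]
    have hNne : N ≠ 0 := by omega
    simp [zero_pow hNne]
  -- lower bound on I2
  have hlow : Real.exp (-R ^ 2 / 2) * (R ^ (N + 2) / ((N : ℝ) + 2)) ≤ I2 := by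
    have hmono : (∫ s in (0:ℝ)..R, Real.exp (-R ^ 2 / 2) * s ^ (N + 1)) ≤ I2 := by
      apply intervalIntegral.integral_mono_on hR0.le
        (((continuous_const.mul (continuous_pow (N + 1))).intervalIntegrable 0 R))
        (hint (N + 1))
      intro x hx
      have hx0 : 0 ≤ x := hx.1
      have hxR : x ≤ R := hx.2
      have hsq : x ^ 2 ≤ R ^ 2 := pow_le_pow_left₀ hx0 hxR 2
      have : Real.exp (-R ^ 2 / 2) ≤ Real.exp (-x ^ 2 / 2) := by
        apply Real.exp_le_exp.mpr; linarith
      exact mul_le_mul_of_nonneg_right this (pow_nonneg hx0 _)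
    calc Real.exp (-R ^ 2 / 2) * (R ^ (N + 2) / ((N : ℝ) + 2))
        = ∫ s in (0:ℝ)..R, Real.exp (-R ^ 2 / 2) * s ^ (N + 1) := by
          rw [intervalIntegral.integral_const_mul, integral_pow]
          push_cast
          ring_nf
      _ ≤ I2 := hmono
  have hE : 0 < R ^ N * Real.exp (-R ^ 2 / 2) := by positivity
  have hI2pos : 0 < I2 :=
    lt_of_lt_of_le (by positivity) hlow
  have hpow : R ^ (N + 2) = R ^ N * ((N : ℝ) - 1) := by
    rw [pow_add, hR2]
  rw [div_le_div_iff₀ hI2pos (by linarith)]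
  have hN2 : (0:ℝ) < (N : ℝ) + 2 := by positivity
  have hlow' : Real.exp (-R ^ 2 / 2) * (R ^ N * ((N : ℝ) - 1)) ≤ ((N : ℝ) + 2) * I2 := by
    have := mul_le_mul_of_nonneg_left hlow hN2.le
    rw [hpow] at this
    calc Real.exp (-R ^ 2 / 2) * (R ^ N * ((N : ℝ) - 1))
        = ((N : ℝ) + 2) * (Real.exp (-R ^ 2 / 2) * (R ^ N * ((N : ℝ) - 1) / ((N : ℝ) + 2))) := by
          field_simp
      _ ≤ ((N : ℝ) + 2) * I2 := this
  nlinarith [hFTC, hlow', hI2pos, hE]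
end

section
/- For every natural number N ≥ 1, the quantity k(√(N+2)) = N·(∫₀^{√(N+2)} e^{-s²/2} s^{N-1} ds)/(∫₀^{√(N+2)} e^{-s²/2} s^{N+1} ds) satisfies k(√(N+2)) < 2. -/
open Real

/-- For every natural number `N ≥ 1`, the quantity
`k(√(N+2)) = N·(∫₀^{√(N+2)} e^{-s²/2} s^{N-1} ds)/(∫₀^{√(N+2)} e^{-s²/2} s^{N+1} ds)`
satisfies `k(√(N+2)) < 2`. -/
theorem k_sqrt_add_two_lt_two (N : ℕ) (hN : 1 ≤ N) :
    (N : ℝ) * (∫ s in (0:ℝ)..Real.sqrt ((N : ℝ) + 2), Real.exp (-s ^ 2 / 2) * s ^ (N - 1)) /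
        (∫ s in (0:ℝ)..Real.sqrt ((N : ℝ) + 2), Real.exp (-s ^ 2 / 2) * s ^ (N + 1)) < 2 := by
  obtain ⟨n, rfl⟩ : ∃ n, N = n + 1 := ⟨N - 1, (Nat.succ_pred_eq_of_pos hN).symm⟩
  set R : ℝ := Real.sqrt ((↑(n + 1) : ℝ) + 2) with hRdef
  have hbase : (0:ℝ) ≤ (↑(n + 1) : ℝ) + 2 := by positivity
  have hRpos : 0 < R := Real.sqrt_pos.2 (by positivity)
  have hR2 : R ^ 2 = (n : ℝ) + 3 := by
    rw [hRdef, Real.sq_sqrt hbase]; push_cast; ring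
  -- derivative of exp(-s^2/2)
  have hexp : ∀ s : ℝ, HasDerivAt (fun s : ℝ => Real.exp (-s ^ 2 / 2))
      (Real.exp (-s ^ 2 / 2) * (-s)) s := by
    intro s
    have h0 : HasDerivAt (fun s : ℝ => -s ^ 2 / 2) (-s) s := by
      have h := ((hasDerivAt_pow 2 s).neg).div_const 2
      exact h.congr_deriv (by simp; ring)
    exact h0.exp
  -- derivative of -(s^(n+1) * exp(-s^2/2))
  have hF : ∀ s : ℝ, HasDerivAt (fun s : ℝ => -(s ^ (n + 1) * Real.exp (-s ^ 2 / 2)))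
      (Real.exp (-s ^ 2 / 2) * s ^ (n + 2) - ((n : ℝ) + 1) * (Real.exp (-s ^ 2 / 2) * s ^ n)) s := by
    intro s
    have h := ((hasDerivAt_pow (n + 1) s).mul (hexp s)).neg
    exact h.congr_deriv (by push_cast; ring)
  -- continuity / integrability facts
  have hcont : ∀ m : ℕ, Continuous (fun s : ℝ => Real.exp (-s ^ 2 / 2) * s ^ m) := by
    intro m; continuity
  have hint : ∀ m : ℕ, IntervalIntegrable (fun s : ℝ => Real.exp (-s ^ 2 / 2) * s ^ m)
      MeasureTheory.volume 0 R := fun m => (hcont m).intervalIntegrable 0 R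
  -- integration by parts identity
  have hIBP : (∫ s in (0:ℝ)..R, Real.exp (-s ^ 2 / 2) * s ^ (n + 2))
      = ((n : ℝ) + 1) * (∫ s in (0:ℝ)..R, Real.exp (-s ^ 2 / 2) * s ^ n)
        - R ^ (n + 1) * Real.exp (-R ^ 2 / 2) := by
    have h := intervalIntegral.integral_eq_sub_of_hasDerivAt
      (f := fun s : ℝ => -(s ^ (n + 1) * Real.exp (-s ^ 2 / 2)))
      (fun s _ => hF s)
      (((hint (n + 2)).sub (((hint n).const_mul ((n : ℝ) + 1)))))
    rw [intervalIntegral.integral_sub (hint (n + 2)) ((hint n).const_mul ((n : ℝ) + 1)),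
      intervalIntegral.integral_const_mul] at h
    simp only [zero_pow, ne_eq, Nat.succ_ne_zero, not_false_iff, zero_mul, mul_zero, neg_zero,
      sub_zero] at h
    linarith [h]
  set I2 : ℝ := ∫ s in (0:ℝ)..R, Real.exp (-s ^ 2 / 2) * s ^ (n + 2) with hI2
  set I0 : ℝ := ∫ s in (0:ℝ)..R, Real.exp (-s ^ 2 / 2) * s ^ n with hI0
  -- strict lower bound for I2
  have hkey : R ^ (n + 1) * Real.exp (-R ^ 2 / 2) < I2 := by
    have hpos : 0 < ∫ s in (0:ℝ)..R,
        (Real.exp (-s ^ 2 / 2) - Real.exp (-R ^ 2 / 2)) * s ^ (n + 2) := by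
      apply intervalIntegral.intervalIntegral_pos_of_pos_on
      · exact (by continuity : Continuous fun s : ℝ =>
          (Real.exp (-s ^ 2 / 2) - Real.exp (-R ^ 2 / 2)) * s ^ (n + 2)).intervalIntegrable 0 R
      · intro x hx
        have hx0 := hx.1
        have hxR := hx.2
        have hlt : Real.exp (-R ^ 2 / 2) < Real.exp (-x ^ 2 / 2) := by
          apply Real.exp_lt_exp.2; nlinarith
        exact mul_pos (sub_pos.2 hlt) (pow_pos hx0 _)
      · exact hRpos
    have hsplit : (∫ s in (0:ℝ)..R,
        (Real.exp (-s ^ 2 / 2) - Real.exp (-R ^ 2 / 2)) * s ^ (n + 2))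
        = I2 - Real.exp (-R ^ 2 / 2) * (R ^ (n + 3) / (n + 3)) := by
      have e1 : ∀ s : ℝ, (Real.exp (-s ^ 2 / 2) - Real.exp (-R ^ 2 / 2)) * s ^ (n + 2)
          = Real.exp (-s ^ 2 / 2) * s ^ (n + 2) - Real.exp (-R ^ 2 / 2) * s ^ (n + 2) := by
        intro s; ring
      simp only [e1]
      rw [intervalIntegral.integral_sub (hint (n + 2))
        (((continuous_pow (n + 2)).intervalIntegrable 0 R).const_mul _),
        intervalIntegral.integral_const_mul, integral_pow]
      rw [show n + 2 + 1 = n + 3 from rfl, ← hI2]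
      norm_num
      ring_nf
    have hRpow : Real.exp (-R ^ 2 / 2) * (R ^ (n + 3) / (n + 3))
        = R ^ (n + 1) * Real.exp (-R ^ 2 / 2) := by
      have : R ^ (n + 3) = R ^ (n + 1) * ((n : ℝ) + 3) := by
        have : R ^ (n + 3) = R ^ (n + 1) * R ^ 2 := by ring
        rw [this, hR2]
      rw [this]
      field_simp
    rw [hsplit, hRpow] at hpos
    linarith
  have hI2pos : 0 < I2 := lt_trans (by positivity) hkey
  -- finish
  have hNI : ((n : ℝ) + 1) * I0 = I2 + R ^ (n + 1) * Real.exp (-R ^ 2 / 2) := by linarith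
  have hgoal : ((n : ℝ) + 1) * I0 / I2 < 2 := by
    rw [div_lt_iff₀ hI2pos, hNI]
    linarith
  simpa [Nat.add_sub_cancel] using hgoal
end

section
/- Let L ∈ (0,1) and consider intervals (a, b(a)) of Gaussian measure L with b(a) = √2·erf⁻¹(2L + erf((√2/2)a)). The Gaussian perimeter P(a) = (2π)^{-1/2}(e^{-a²/2} + e^{-b(a)²/2}) attains its maximum over all finite a exactly at a = −√2·erf⁻¹(L), i.e., at the interval symmetric about the origin. -/
open Real

/-- The error function `erf(x) = (2/√π)∫₀ˣ e^{-t²} dt`. -/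
noncomputable def erf (x : ℝ) : ℝ :=
  2 / Real.sqrt Real.pi * ∫ t in (0:ℝ)..x, Real.exp (-t ^ 2)

noncomputable def gs (x : ℝ) : ℝ := Real.exp (-x ^ 2 / 2)

lemma gs_cont : Continuous gs := by
  unfold gs; fun_prop

lemma gs_pos (x : ℝ) : 0 < gs x := Real.exp_pos _

lemma gs_intble (a b : ℝ) : IntervalIntegrable gs MeasureTheory.volume a b :=
  gs_cont.intervalIntegrable a b

lemma tgs_intble (a b : ℝ) :
    IntervalIntegrable (fun t => t * gs t) MeasureTheory.volume a b :=
  (continuous_id.mul gs_cont).intervalIntegrable a b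

lemma hasDerivAt_gs (x : ℝ) : HasDerivAt gs (-x * gs x) x := by
  have h1 : HasDerivAt (fun x : ℝ => -x ^ 2 / 2) (-x) x := by
    have h := ((hasDerivAt_pow 2 x).neg).div_const 2
    refine h.congr_deriv ?_
    norm_num
    ring
  have h2 := h1.exp
  unfold gs
  simpa [mul_comm] using h2

/-- FTC: `∫ t in x..y, t e^{-t²/2} = e^{-x²/2} - e^{-y²/2}`. -/
lemma ftc_gs (x y : ℝ) : (∫ t in x..y, t * gs t) = gs x - gs y := by
  have h : ∀ t ∈ Set.uIcc x y, HasDerivAt (fun u => -gs u) (t * gs t) t := by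
    intro t _
    have := (hasDerivAt_gs t).neg
    exact this.congr_deriv (by ring)
  rw [intervalIntegral.integral_eq_sub_of_hasDerivAt h (tgs_intble x y)]
  ring

lemma int_sub_gs (c x y : ℝ) :
    (∫ t in x..y, (t - c) * gs t) =
      (∫ t in x..y, t * gs t) - c * ∫ t in x..y, gs t := by
  rw [← intervalIntegral.integral_const_mul,
    ← intervalIntegral.integral_sub (tgs_intble x y)
      (g := fun t => c * gs t) ((continuous_const.mul gs_cont).intervalIntegrable x y)]
  apply intervalIntegral.integral_congr
  intro t _
  ring

lemma int_sub_gs' (c x y : ℝ) :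
    (∫ t in x..y, (c - t) * gs t) =
      c * (∫ t in x..y, gs t) - ∫ t in x..y, t * gs t := by
  rw [← intervalIntegral.integral_const_mul,
    ← intervalIntegral.integral_sub (f := fun t => c * gs t)
      ((continuous_const.mul gs_cont).intervalIntegrable x y) (tgs_intble x y)]
  apply intervalIntegral.integral_congr
  intro t _
  ring

lemma E_pos {x y : ℝ} (h : x < y) : 0 < ∫ t in x..y, gs t :=
  intervalIntegral.intervalIntegral_pos_of_pos (gs_intble x y) (fun t => gs_pos t) h

lemma exp_neg_sq_intble (a b : ℝ) :
    IntervalIntegrable (fun t : ℝ => Real.exp (-t ^ 2)) MeasureTheory.volume a b := by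
  apply Continuous.intervalIntegrable
  fun_prop

lemma erf_neg (z : ℝ) : erf (-z) = -erf z := by
  have h2 : (∫ t in (0:ℝ)..z, Real.exp (-(-t) ^ 2)) =
      ∫ t in (-z:ℝ)..(-(0:ℝ)), Real.exp (-t ^ 2) :=
    intervalIntegral.integral_comp_neg (a := 0) (b := z) (fun t => Real.exp (-t ^ 2))
  have h3 : (∫ t in (0:ℝ)..z, Real.exp (-(-t) ^ 2)) =
      ∫ t in (0:ℝ)..z, Real.exp (-t ^ 2) := by
    apply intervalIntegral.integral_congr
    intro t _
    norm_num
  have h4 : (∫ t in ((-z):ℝ)..0, Real.exp (-t ^ 2)) =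
      -∫ t in (0:ℝ)..(-z), Real.exp (-t ^ 2) :=
    intervalIntegral.integral_symm 0 (-z)
  have h5 : (∫ t in (0:ℝ)..(-z), Real.exp (-t ^ 2)) =
      -∫ t in (0:ℝ)..z, Real.exp (-t ^ 2) := by
    have h2' := h2
    rw [neg_zero] at h2'
    rw [h3] at h2'
    linarith [h4, h2']
  unfold erf
  rw [h5]
  ring

lemma erf_nonneg {z : ℝ} (hz : 0 ≤ z) : 0 ≤ erf z := by
  unfold erf
  apply mul_nonneg
  · positivity
  · apply intervalIntegral.integral_nonneg hz
    intro u _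
    positivity

/-- The constraint in terms of the Gaussian integral. -/
lemma erf_sub (x y : ℝ) :
    erf (y / Real.sqrt 2) - erf (x / Real.sqrt 2) =
      2 / Real.sqrt Real.pi * ((Real.sqrt 2)⁻¹ * ∫ t in x..y, gs t) := by
  have hs2 : (Real.sqrt 2) ≠ 0 := by positivity
  have h1 : (∫ t in (0:ℝ)..(y / Real.sqrt 2), Real.exp (-t ^ 2)) -
      ∫ t in (0:ℝ)..(x / Real.sqrt 2), Real.exp (-t ^ 2) =
      ∫ t in (x / Real.sqrt 2)..(y / Real.sqrt 2), Real.exp (-t ^ 2) :=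
    intervalIntegral.integral_interval_sub_left (exp_neg_sq_intble _ _) (exp_neg_sq_intble _ _)
  have h2 : (∫ u in x..y, Real.exp (-(u / Real.sqrt 2) ^ 2)) =
      Real.sqrt 2 • ∫ t in (x / Real.sqrt 2)..(y / Real.sqrt 2), Real.exp (-t ^ 2) :=
    intervalIntegral.integral_comp_div (f := fun t => Real.exp (-t ^ 2)) hs2
  have h3 : (∫ u in x..y, Real.exp (-(u / Real.sqrt 2) ^ 2)) = ∫ t in x..y, gs t := by
    apply intervalIntegral.integral_congr
    intro u _
    show Real.exp (-(u / Real.sqrt 2) ^ 2) = Real.exp (-u ^ 2 / 2)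
    rw [div_pow, Real.sq_sqrt (by norm_num : (0:ℝ) ≤ 2)]
    ring_nf
  rw [h3, smul_eq_mul] at h2
  unfold erf
  rw [h2, inv_mul_cancel_left₀ hs2, ← h1]
  ring

/-- Key strict inequality: any non-symmetric interval with the same Gaussian
measure as `(a₀, -a₀)` has strictly smaller perimeter. -/
lemma key (a₀ a b : ℝ) (hne : a ≠ a₀)
    (hE : (∫ t in a..b, gs t) = ∫ t in a₀..(-a₀), gs t) :
    gs a + gs b < gs a₀ + gs (-a₀) := by
  rcases hne.lt_or_gt with hlt | hgt
  · -- a < a₀ : interval shifted left, then b < -a₀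
    have i1 : (∫ t in a..b, gs t) - ∫ t in a..a₀, gs t = ∫ t in a₀..b, gs t :=
      intervalIntegral.integral_interval_sub_left (gs_intble a b) (gs_intble a a₀)
    have i2 : (∫ t in a₀..(-a₀), gs t) - ∫ t in a₀..b, gs t = ∫ t in b..(-a₀), gs t :=
      intervalIntegral.integral_interval_sub_left (gs_intble a₀ (-a₀)) (gs_intble a₀ b)
    have hM : (∫ t in a..a₀, gs t) = ∫ t in b..(-a₀), gs t := by linarith
    have hMpos : 0 < ∫ t in a..a₀, gs t := E_pos hlt
    have hbb : b < -a₀ := by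
      by_contra h
      push_neg at h
      rcases eq_or_lt_of_le h with he | hl
      · rw [← he, intervalIntegral.integral_same] at hM
        linarith
      · have hp := E_pos hl
        rw [intervalIntegral.integral_symm (-a₀) b] at hM
        linarith
    have f1 : (∫ t in a..a₀, t * gs t) = gs a - gs a₀ := ftc_gs a a₀
    have f2 : (∫ t in b..(-a₀), t * gs t) = gs b - gs (-a₀) := ftc_gs b (-a₀)
    have p1 : 0 < ∫ t in a..a₀, (a₀ - t) * gs t := by
      apply intervalIntegral.intervalIntegral_pos_of_pos_on
      · exact ((continuous_const.sub continuous_id).mul gs_cont).intervalIntegrable a a₀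
      · intro t ht
        exact mul_pos (by linarith [ht.2]) (gs_pos t)
      · exact hlt
    have p2 : 0 ≤ ∫ t in b..(-a₀), (-a₀ - t) * gs t := by
      apply intervalIntegral.integral_nonneg hbb.le
      intro u hu
      exact mul_nonneg (by linarith [hu.2]) (gs_pos u).le
    rw [int_sub_gs'] at p1 p2
    rw [← hM] at p2
    nlinarith [p1, p2, f1, f2]
  · -- a₀ < a : interval shifted right, then -a₀ < b
    have i1 : (∫ t in a₀..(-a₀), gs t) - ∫ t in a₀..a, gs t = ∫ t in a..(-a₀), gs t :=
      intervalIntegral.integral_interval_sub_left (gs_intble a₀ (-a₀)) (gs_intble a₀ a)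
    have i2 : (∫ t in a..b, gs t) - ∫ t in a..(-a₀), gs t = ∫ t in (-a₀)..b, gs t :=
      intervalIntegral.integral_interval_sub_left (gs_intble a b) (gs_intble a (-a₀))
    have hM : (∫ t in a₀..a, gs t) = ∫ t in (-a₀)..b, gs t := by linarith
    have hMpos : 0 < ∫ t in a₀..a, gs t := E_pos hgt
    have hbb : -a₀ < b := by
      by_contra h
      push_neg at h
      rcases eq_or_lt_of_le h with he | hl
      · rw [he, intervalIntegral.integral_same] at hM
        linarith
      · have hp := E_pos hl
        rw [intervalIntegral.integral_symm b (-a₀)] at hM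
        linarith
    have f1 : (∫ t in a₀..a, t * gs t) = gs a₀ - gs a := ftc_gs a₀ a
    have f2 : (∫ t in (-a₀)..b, t * gs t) = gs (-a₀) - gs b := ftc_gs (-a₀) b
    have p1 : 0 < ∫ t in a₀..a, (t - a₀) * gs t := by
      apply intervalIntegral.intervalIntegral_pos_of_pos_on
      · exact ((continuous_id.sub continuous_const).mul gs_cont).intervalIntegrable a₀ a
      · intro t ht
        exact mul_pos (by linarith [ht.1]) (gs_pos t)
      · exact hgt
    have p2 : 0 ≤ ∫ t in (-a₀)..b, (t - (-a₀)) * gs t := by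
      apply intervalIntegral.integral_nonneg hbb.le
      intro u hu
      exact mul_nonneg (by linarith [hu.1]) (gs_pos u).le
    rw [int_sub_gs] at p1 p2
    rw [← hM] at p2
    nlinarith [p1, p2, f1, f2]

/-- Among all intervals `(a, b)` of fixed Gaussian measure `L ∈ (0,1)`
(the constraint being `erf(b/√2) − erf(a/√2) = 2L`), the Gaussian perimeter
`P(a,b) = (2π)^{-1/2}(e^{-a²/2} + e^{-b²/2})` attains its maximum exactly at
the symmetric interval, i.e. at `a₀ = −√2 erf⁻¹(L)`, `b₀ = −a₀`. -/
theorem gaussian_perimeter_max (L a₀ : ℝ) (hL0 : 0 < L) (hL1 : L < 1)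
    (ha₀ : erf (a₀ / Real.sqrt 2) = -L) :
    ∀ a b : ℝ, a < b → erf (b / Real.sqrt 2) - erf (a / Real.sqrt 2) = 2 * L →
      ((2 * Real.pi) ^ (-(1:ℝ)/2) * (Real.exp (-a ^ 2 / 2) + Real.exp (-b ^ 2 / 2)) ≤
          (2 * Real.pi) ^ (-(1:ℝ)/2) *
            (Real.exp (-a₀ ^ 2 / 2) + Real.exp (-(-a₀) ^ 2 / 2)) ∧
        ((2 * Real.pi) ^ (-(1:ℝ)/2) * (Real.exp (-a ^ 2 / 2) + Real.exp (-b ^ 2 / 2)) =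
            (2 * Real.pi) ^ (-(1:ℝ)/2) *
              (Real.exp (-a₀ ^ 2 / 2) + Real.exp (-(-a₀) ^ 2 / 2)) ↔
          a = a₀)) := by
  intro a b hab hconstraint
  -- the symmetric interval also satisfies the constraint
  have hsym : erf ((-a₀) / Real.sqrt 2) - erf (a₀ / Real.sqrt 2) = 2 * L := by
    rw [neg_div, erf_neg, ha₀]
    ring
  -- translate both constraints into Gaussian integrals
  have hk1 : (2:ℝ) / Real.sqrt Real.pi ≠ 0 := by positivity
  have hk2 : (Real.sqrt 2)⁻¹ ≠ 0 := by positivity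
  have hEab := erf_sub a b
  have hEa₀ := erf_sub a₀ (-a₀)
  rw [hconstraint] at hEab
  rw [hsym] at hEa₀
  have hEE : (∫ t in a..b, gs t) = ∫ t in a₀..(-a₀), gs t := by
    have h := hEab.symm.trans hEa₀
    exact mul_left_cancel₀ hk2 (mul_left_cancel₀ hk1 h)
  rcases eq_or_ne a a₀ with heq | hne
  · -- symmetric case: a = a₀ forces b = -a₀
    subst heq
    have hb : b = -a := by
      have i : (∫ t in a..b, gs t) - ∫ t in a..(-a), gs t = ∫ t in (-a)..b, gs t :=
        intervalIntegral.integral_interval_sub_left (gs_intble a b) (gs_intble a (-a))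
    -- ∫ (-a)..b = 0
      have hz : (∫ t in (-a)..b, gs t) = 0 := by
        rw [← i, hEE]
        ring
      rcases lt_trichotomy b (-a) with h | h | h
      · have hp := E_pos h
        rw [intervalIntegral.integral_symm] at hz
        linarith
      · exact h
      · have hp := E_pos h
        linarith
    subst hb
    exact ⟨le_refl _, ⟨fun _ => rfl, fun _ => rfl⟩⟩
  · have hlt : gs a + gs b < gs a₀ + gs (-a₀) := key a₀ a b hne hEE
    have hc : (0:ℝ) < (2 * Real.pi) ^ (-(1:ℝ)/2) :=
      Real.rpow_pos_of_pos (by positivity) _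
    have hlt' : Real.exp (-a ^ 2 / 2) + Real.exp (-b ^ 2 / 2) <
        Real.exp (-a₀ ^ 2 / 2) + Real.exp (-(-a₀) ^ 2 / 2) := hlt
    have hmain := mul_lt_mul_of_pos_left hlt' hc
    exact ⟨hmain.le, ⟨fun h => absurd h hmain.ne, fun h => absurd h hne⟩⟩
end

section
/- Let (a,b) ⊂ ℝ with −∞ < a < b < ∞ (or half-infinite), and let μ₁ be the first nontrivial Neumann eigenvalue of −u'' + x u' = μ u on (a,b) with u'(a) = u'(b) = 0, and λ₁ the first Dirichlet eigenvalue of −v'' + x v' = λ v on (a,b) with v(a) = v(b) = 0. Then μ₁ = λ₁ + 1. -/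
open Real MeasureTheory intervalIntegral Set


noncomputable def gauss (x : ℝ) : ℝ := Real.exp (-x ^ 2 / 2)

lemma gauss_pos (x : ℝ) : 0 < gauss x := Real.exp_pos _

lemma continuous_gauss : Continuous gauss := by
  unfold gauss; fun_prop

lemma hasDerivAt_gauss (x : ℝ) : HasDerivAt gauss (-x * gauss x) x := by
  have h : HasDerivAt (fun x : ℝ => -x ^ 2 / 2) (-x) x := by
    have := ((hasDerivAt_pow 2 x).neg).div_const 2
    simpa using this.congr_deriv (by ring)
  have := h.exp
  have heq : HasDerivAt (fun x : ℝ => Real.exp (-x ^ 2 / 2)) (Real.exp (-x^2/2) * -x) x := this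
  simpa [gauss, mul_comm] using (show HasDerivAt gauss _ x from heq)

-- algebra core lemma
lemma key_alg (A B C D E F μ : ℝ) (hD : 0 < D) (hF : 0 ≤ F) (hA : A = μ * D)
    (h : ∀ t : ℝ, 0 < D + 2*t*E + t^2*F → μ * (D + 2*t*E + t^2*F) ≤ A + 2*t*B + t^2*C) :
    B = μ * E := by
  by_contra hne
  set β := B - μ * E with hβ
  have hβne : β ≠ 0 := by
    intro h0; apply hne; have : B - μ * E = 0 := h0; linarith
  set κ := C - μ * F with hκ
  set ε : ℝ := min (D / (2 * (|β| * |E|) + 1)) (1 / (|κ| + 1)) with hε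
  have hεpos : 0 < ε := by
    apply lt_min
    · positivity
    · positivity
  have h1 : ε * (|β| * |E|) < D / 2 := by
    have h2 : ε ≤ D / (2 * (|β| * |E|) + 1) := min_le_left _ _
    have h3 : 0 ≤ |β| * |E| := by positivity
    calc ε * (|β| * |E|) ≤ D / (2 * (|β| * |E|) + 1) * (|β| * |E|) := by
          apply mul_le_mul_of_nonneg_right h2 h3
      _ < D / 2 := by
          rw [div_mul_eq_mul_div, div_lt_div_iff₀ (by positivity) (by norm_num)]
          nlinarith
  have h2 : ε * κ < 2 := by
    have : ε ≤ 1 / (|κ| + 1) := min_le_right _ _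
    have hk : κ ≤ |κ| := le_abs_self κ
    have h4 : ε * κ ≤ ε * |κ| := by nlinarith
    have h5 : ε * |κ| ≤ (1 / (|κ| + 1)) * |κ| := by nlinarith [abs_nonneg κ]
    have h6 : (1 / (|κ| + 1)) * |κ| < 1 := by
      rw [div_mul_eq_mul_div, one_mul, div_lt_one (by positivity)]
      linarith [abs_nonneg κ]
    linarith
  set t : ℝ := -β * ε with ht
  have habs : |t| = |β| * ε := by rw [ht, abs_mul, abs_neg, abs_of_pos hεpos]
  have hDpos : 0 < D + 2*t*E + t^2*F := by
    have htE : -(2 * (|β| * ε * |E|)) ≤ 2*t*E := by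
      have : |2*t*E| ≤ 2 * (|β| * ε * |E|) := by
        rw [abs_mul, abs_mul, habs]
        have : |(2:ℝ)| = 2 := by norm_num
        rw [this]
        nlinarith [abs_nonneg E, abs_nonneg β, hεpos.le]
      linarith [neg_abs_le (2*t*E)]
    nlinarith [sq_nonneg t, mul_nonneg (sq_nonneg t) hF, h1]
  have := h t hDpos
  rw [hA] at this
  have hq : 0 ≤ 2*t*β + t^2*κ := by
    have expand : 2*t*β + t^2*κ = (μ * D + 2*t*B + t^2*C) - μ * (D + 2*t*E + t^2*F) := by
      rw [hβ, hκ]; ring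
    rw [expand]; linarith
  rw [ht] at hq
  have hb2 : 0 < β^2 := by positivity
  nlinarith [hq, hεpos, h2, mul_pos hεpos hb2]


lemma eq_zero_of_integral_zero (a b : ℝ) (hab : a < b) (f : ℝ → ℝ) (hf : Continuous f)
    (hnn : ∀ x, 0 ≤ f x) (hint : (∫ x in a..b, f x) = 0) : ∀ x ∈ Icc a b, f x = 0 := by
  intro x₀ hx₀
  by_contra hne
  have hpos : 0 < f x₀ := lt_of_le_of_ne (hnn x₀) (Ne.symm hne)
  obtain ⟨δ, hδpos, hδ⟩ : ∃ δ > 0, ∀ y, |y - x₀| < δ → f x₀ / 2 < f y := by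
    have := hf.continuousAt (x := x₀)
    rw [Metric.continuousAt_iff] at this
    obtain ⟨δ, hδpos, hδ⟩ := this (f x₀ / 2) (by linarith)
    exact ⟨δ, hδpos, fun y hy => by
      have := hδ (show dist y x₀ < δ by simpa [Real.dist_eq] using hy)
      rw [Real.dist_eq] at this
      cases abs_lt.mp this with
      | intro h1 h2 => linarith⟩
  set c := max a (x₀ - δ/2) with hc
  set d := min b (x₀ + δ/2) with hd
  have hcd : c < d := by
    apply max_lt <;> [skip; skip] <;> apply lt_min
    · exact hab
    · linarith [hx₀.1, hδpos]
    · linarith [hx₀.2, hδpos]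
    · linarith [hδpos]
  have hlow : ∀ y ∈ Icc c d, f x₀ / 2 ≤ f y := by
    intro y hy
    apply le_of_lt; apply hδ
    rw [abs_lt]
    constructor
    · have : x₀ - δ/2 ≤ c := le_max_right _ _
      linarith [hy.1]
    · have : d ≤ x₀ + δ/2 := min_le_right _ _
      linarith [hy.2]
  have hac : a ≤ c := le_max_left _ _
  have hdb : d ≤ b := min_le_left _ _
  have hint1 : IntervalIntegrable f volume a c := hf.intervalIntegrable _ _
  have hint2 : IntervalIntegrable f volume c d := hf.intervalIntegrable _ _
  have hint3 : IntervalIntegrable f volume d b := hf.intervalIntegrable _ _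
  have hsplit : (∫ x in a..b, f x) = (∫ x in a..c, f x) + (∫ x in c..d, f x) + (∫ x in d..b, f x) := by
    rw [integral_add_adjacent_intervals hint1 hint2,
        integral_add_adjacent_intervals (hint1.trans hint2) hint3]
  have h1 : 0 ≤ ∫ x in a..c, f x := integral_nonneg hac (fun x _ => hnn x)
  have h3 : 0 ≤ ∫ x in d..b, f x := integral_nonneg hdb (fun x _ => hnn x)
  have h2 : (d - c) * (f x₀ / 2) ≤ ∫ x in c..d, f x := by
    have := integral_mono_on hcd.le (intervalIntegrable_const) hint2 hlow
    calc (d - c) * (f x₀ / 2) = (d-c) * f x₀ / 2 := by ring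
      _ ≤ _ := by simpa using this
  have : 0 < (d - c) * (f x₀ / 2) := by
    apply mul_pos (by linarith) (by linarith)
  linarith [hsplit, hint]

lemma integral_quad (a b t : ℝ) (f g w : ℝ → ℝ) (hf : Continuous f) (hg : Continuous g)
    (hw : Continuous w) :
    (∫ x in a..b, (f x + t * g x)^2 * w x) = (∫ x in a..b, f x ^2 * w x)
      + 2*t*(∫ x in a..b, f x * g x * w x) + t^2 * (∫ x in a..b, g x^2 * w x) := by
  have key : ∀ x : ℝ, (f x + t * g x)^2 * w x
      = f x^2 * w x + (2*t) * (f x * g x * w x) + t^2 * (g x^2 * w x) := by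
    intro x; ring
  simp only [key]
  rw [integral_add (f := fun x => f x ^ 2 * w x + 2 * t * (f x * g x * w x))
        (g := fun x => t ^ 2 * (g x ^ 2 * w x)) ((((hf.pow 2).mul hw).add
        (continuous_const.mul ((hf.mul hg).mul hw))).intervalIntegrable _ _)
        ((continuous_const.mul ((hg.pow 2).mul hw)).intervalIntegrable _ _),
      integral_add (f := fun x => f x ^ 2 * w x) (g := fun x => 2 * t * (f x * g x * w x))
        (((hf.pow 2).mul hw).intervalIntegrable _ _)
        ((continuous_const.mul ((hf.mul hg).mul hw)).intervalIntegrable _ _),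
      intervalIntegral.integral_const_mul, intervalIntegral.integral_const_mul]


lemma EL_general (a b μ : ℝ) (hab : a ≤ b) (u du φ dφ : ℝ → ℝ)
    (hu : Continuous u) (hdu : Continuous du) (hφ : Continuous φ) (hdφ : Continuous dφ)
    (hD : 0 < ∫ x in a..b, u x^2 * gauss x)
    (hN : (∫ x in a..b, du x^2 * gauss x) = μ * ∫ x in a..b, u x^2 * gauss x)
    (hmem : ∀ t : ℝ, 0 < (∫ x in a..b, (u x + t * φ x)^2 * gauss x) →
      μ * (∫ x in a..b, (u x + t * φ x)^2 * gauss x)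
        ≤ ∫ x in a..b, (du x + t * dφ x)^2 * gauss x) :
    (∫ x in a..b, du x * dφ x * gauss x) = μ * ∫ x in a..b, u x * φ x * gauss x := by
  apply key_alg (∫ x in a..b, du x^2 * gauss x) _ (∫ x in a..b, dφ x^2 * gauss x)
    (∫ x in a..b, u x^2 * gauss x) _ (∫ x in a..b, φ x^2 * gauss x) μ hD
    (integral_nonneg hab (fun x _ => mul_nonneg (sq_nonneg _) (gauss_pos x).le)) hN
  intro t ht
  rw [← integral_quad a b t u φ gauss hu hφ continuous_gauss] at ht ⊢
  rw [← integral_quad a b t du dφ gauss hdu hdφ continuous_gauss]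
  exact hmem t ht

lemma hasDerivAt_primitive (a : ℝ) (f : ℝ → ℝ) (hf : Continuous f) (x : ℝ) :
    HasDerivAt (fun y => ∫ t in a..y, f t) (f x) x :=
  integral_hasDerivAt_right (hf.intervalIntegrable _ _)
    hf.stronglyMeasurable.stronglyMeasurableAtFilter hf.continuousAt

lemma contDiff_primitive (a : ℝ) (f : ℝ → ℝ) (hf : Continuous f) :
    ContDiff ℝ 1 (fun y => ∫ t in a..y, f t) := by
  rw [contDiff_one_iff_deriv]
  constructor
  · exact fun x => (hasDerivAt_primitive a f hf x).differentiableAt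
  · have : deriv (fun y => ∫ t in a..y, f t) = f :=
      funext fun x => (hasDerivAt_primitive a f hf x).deriv
    rw [this]; exact hf

lemma dBR (a b : ℝ) (hab : a < b) (G : ℝ → ℝ) (hG : Continuous G)
    (h : ∀ φ : ℝ → ℝ, ContDiff ℝ 1 φ → φ a = 0 → φ b = 0 →
      (∫ x in a..b, G x * deriv φ x) = 0) :
    ∀ x ∈ Icc a b, G x = (∫ y in a..b, G y) / (b - a) := by
  set c : ℝ := (∫ y in a..b, G y) / (b - a) with hc
  have hcb : c * (b - a) = ∫ y in a..b, G y := by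
    rw [hc, div_mul_cancel₀]; linarith
  set φ₀ : ℝ → ℝ := fun y => ∫ t in a..y, (G t - c) with hφ₀
  have hGc : Continuous (fun t => G t - c) := hG.sub continuous_const
  have hder : deriv φ₀ = fun x => G x - c :=
    funext fun x => (hasDerivAt_primitive a _ hGc x).deriv
  have hint : (∫ x in a..b, G x * (G x - c)) = 0 := by
    have := h φ₀ (contDiff_primitive a _ hGc) (by simp [hφ₀])
      (by
        rw [hφ₀]
        simp only
        rw [integral_sub (hG.intervalIntegrable _ _) (intervalIntegrable_const),
          intervalIntegral.integral_const]
        simp only [smul_eq_mul]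
        linarith [hcb])
    rw [hder] at this
    exact this
  have hsq : (∫ x in a..b, (G x - c)^2) = 0 := by
    have expand : ∀ x : ℝ, (G x - c)^2 = G x * (G x - c) - c * (G x - c) := by intro x; ring
    simp only [expand]
    rw [integral_sub (f := fun x => G x * (G x - c)) (g := fun x => c * (G x - c)) ((hG.mul hGc).intervalIntegrable _ _)
        ((continuous_const.mul hGc).intervalIntegrable _ _),
      intervalIntegral.integral_const_mul, hint,
      integral_sub (hG.intervalIntegrable _ _) intervalIntegrable_const, intervalIntegral.integral_const]
    simp only [smul_eq_mul]
    rw [← hcb]; ring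
  intro x hx
  have := eq_zero_of_integral_zero a b hab (fun x => (G x - c)^2) (hGc.pow 2)
    (fun x => sq_nonneg _) hsq x hx
  have h0 : G x - c = 0 := by
    have := sq_eq_zero_iff.mp this
    exact this
  linarith


lemma integral_split (a b c1 c2 : ℝ) (f1 f2 : ℝ → ℝ) (h1 : Continuous f1) (h2 : Continuous f2) :
    (∫ x in a..b, (c1 * f1 x + c2 * f2 x)) = c1 * (∫ x in a..b, f1 x) + c2 * ∫ x in a..b, f2 x := by
  rw [integral_add (f := fun x => c1 * f1 x) (g := fun x => c2 * f2 x) ((continuous_const.mul h1).intervalIntegrable _ _)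
    ((continuous_const.mul h2).intervalIntegrable _ _), intervalIntegral.integral_const_mul, intervalIntegral.integral_const_mul]

lemma integral_split3 (a b c1 c2 c3 : ℝ) (f1 f2 f3 : ℝ → ℝ) (h1 : Continuous f1)
    (h2 : Continuous f2) (h3 : Continuous f3) :
    (∫ x in a..b, (c1 * f1 x + c2 * f2 x + c3 * f3 x))
      = c1 * (∫ x in a..b, f1 x) + c2 * (∫ x in a..b, f2 x) + c3 * ∫ x in a..b, f3 x := by
  rw [integral_add (f := fun x => c1 * f1 x + c2 * f2 x) (g := fun x => c3 * f3 x)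
    (((continuous_const.mul h1).add (continuous_const.mul h2)).intervalIntegrable _ _)
    ((continuous_const.mul h3).intervalIntegrable _ _), integral_split a b c1 c2 f1 f2 h1 h2,
    intervalIntegral.integral_const_mul]

lemma integral_congr_Icc {a b : ℝ} (hab : a ≤ b) {f g : ℝ → ℝ}
    (h : ∀ x ∈ Icc a b, f x = g x) : (∫ x in a..b, f x) = ∫ x in a..b, g x :=
  integral_congr (by rwa [uIcc_of_le hab])

lemma ftc (a b : ℝ) (F F' : ℝ → ℝ) (h : ∀ x, HasDerivAt F (F' x) x) (hF' : Continuous F') :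
    (∫ x in a..b, F' x) = F b - F a :=
  integral_eq_sub_of_hasDerivAt (fun x _ => h x) (hF'.intervalIntegrable _ _)

lemma hasDerivAt_expsq (x : ℝ) :
    HasDerivAt (fun y : ℝ => Real.exp (y^2/2)) (x * Real.exp (x^2/2)) x := by
  have h : HasDerivAt (fun y : ℝ => y^2/2) x x := by
    simpa using (hasDerivAt_pow 2 x).div_const 2
  simpa [mul_comm] using h.exp

lemma gauss_mul_expsq (x : ℝ) : gauss x * Real.exp (x^2/2) = 1 := by
  rw [gauss, ← Real.exp_add, show -x^2/2 + x^2/2 = 0 by ring, Real.exp_zero]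

lemma contDiff_expsq : ContDiff ℝ 1 (fun y : ℝ => Real.exp (y^2/2)) :=
  (((contDiff_id.pow 2).div_const 2)).exp


lemma EL_neumann (a b μ : ℝ) (hab : a < b) (u : ℝ → ℝ) (hu : ContDiff ℝ 1 u)
    (hmean : (∫ x in a..b, u x * gauss x) = 0)
    (hD : 0 < ∫ x in a..b, u x^2 * gauss x)
    (hlb : ∀ φ : ℝ → ℝ, ContDiff ℝ 1 φ → (∫ x in a..b, φ x * gauss x) = 0 →
      (∫ x in a..b, φ x^2 * gauss x) ≠ 0 →
      μ ≤ (∫ x in a..b, (deriv φ x)^2 * gauss x) / (∫ x in a..b, φ x^2 * gauss x))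
    (hND : (∫ x in a..b, (deriv u x)^2 * gauss x) = μ * ∫ x in a..b, u x^2 * gauss x) :
    ∀ φ : ℝ → ℝ, ContDiff ℝ 1 φ →
      (∫ x in a..b, deriv u x * deriv φ x * gauss x) = μ * ∫ x in a..b, u x * φ x * gauss x := by
  intro φ hφ
  have hγpos : 0 < ∫ x in a..b, gauss x :=
    intervalIntegral_pos_of_pos (continuous_gauss.intervalIntegrable a b) gauss_pos hab
  set cφ : ℝ := (∫ x in a..b, φ x * gauss x) / (∫ x in a..b, gauss x) with hcφ
  set ψ : ℝ → ℝ := fun x => φ x - cφ with hψ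
  have hψc : Continuous ψ := hφ.continuous.sub continuous_const
  have hψmean : (∫ x in a..b, ψ x * gauss x) = 0 := by
    have e1 : (fun x => ψ x * gauss x) = fun x => 1 * (φ x * gauss x) + (-cφ) * gauss x :=
      funext fun x => by simp only [hψ]; ring
    rw [e1, integral_split a b 1 (-cφ) (fun x => φ x * gauss x) gauss (hφ.continuous.mul continuous_gauss) continuous_gauss,
      hcφ]
    field_simp
    ring
  have key : (∫ x in a..b, deriv u x * deriv φ x * gauss x)
      = μ * ∫ x in a..b, u x * ψ x * gauss x := by
    apply EL_general a b μ hab.le u (deriv u) ψ (deriv φ) hu.continuous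
      (hu.continuous_deriv le_rfl) hψc (hφ.continuous_deriv le_rfl) hD hND
    intro t ht
    set w : ℝ → ℝ := fun x => u x + t * ψ x with hw
    have hwcd : ContDiff ℝ 1 w := hu.add (contDiff_const.mul (hφ.sub contDiff_const))
    have hwmean : (∫ x in a..b, w x * gauss x) = 0 := by
      have e1 : (fun x => w x * gauss x) = fun x => 1 * (u x * gauss x) + t * (ψ x * gauss x) :=
        funext fun x => by simp only [hw]; ring
      rw [e1, integral_split a b 1 t (fun x => u x * gauss x) (fun x => ψ x * gauss x) (hu.continuous.mul continuous_gauss)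
        (hψc.mul continuous_gauss), hmean, hψmean]
      ring
    have hwne : (∫ x in a..b, w x^2 * gauss x) ≠ 0 := ne_of_gt ht
    have hderivw : deriv w = fun x => deriv u x + t * deriv φ x := funext fun x => by
      have h1 : HasDerivAt u (deriv u x) x := (hu.differentiable one_ne_zero x).hasDerivAt
      have h2 : HasDerivAt ψ (deriv φ x) x :=
        ((hφ.differentiable one_ne_zero x).hasDerivAt).sub_const cφ
      exact (h1.add (h2.const_mul t)).deriv
    have hq := hlb w hwcd hwmean hwne
    rw [hderivw] at hq
    exact (le_div_iff₀ ht).mp hq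
  rw [key]
  congr 1
  have e2 : (fun x => u x * ψ x * gauss x)
      = fun x => 1 * (u x * φ x * gauss x) + (-cφ) * (u x * gauss x) :=
    funext fun x => by simp only [hψ]; ring
  rw [e2, integral_split a b 1 (-cφ) (fun x => u x * φ x * gauss x) (fun x => u x * gauss x) ((hu.continuous.mul hφ.continuous).mul continuous_gauss)
    (hu.continuous.mul continuous_gauss), hmean]
  ring

lemma EL_dirichlet (a b lam : ℝ) (hab : a < b) (v : ℝ → ℝ) (hv : ContDiff ℝ 1 v)
    (hva : v a = 0) (hvb : v b = 0)
    (hD : 0 < ∫ x in a..b, v x^2 * gauss x)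
    (hlb : ∀ φ : ℝ → ℝ, ContDiff ℝ 1 φ → φ a = 0 → φ b = 0 →
      (∫ x in a..b, φ x^2 * gauss x) ≠ 0 →
      lam ≤ (∫ x in a..b, (deriv φ x)^2 * gauss x) / (∫ x in a..b, φ x^2 * gauss x))
    (hND : (∫ x in a..b, (deriv v x)^2 * gauss x) = lam * ∫ x in a..b, v x^2 * gauss x) :
    ∀ φ : ℝ → ℝ, ContDiff ℝ 1 φ → φ a = 0 → φ b = 0 →
      (∫ x in a..b, deriv v x * deriv φ x * gauss x) = lam * ∫ x in a..b, v x * φ x * gauss x := by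
  intro φ hφ hφa hφb
  apply EL_general a b lam hab.le v (deriv v) φ (deriv φ) hv.continuous
    (hv.continuous_deriv le_rfl) hφ.continuous (hφ.continuous_deriv le_rfl) hD hND
  intro t ht
  set w : ℝ → ℝ := fun x => v x + t * φ x with hw
  have hwcd : ContDiff ℝ 1 w := hv.add (contDiff_const.mul hφ)
  have hwa : w a = 0 := by simp [hw, hva, hφa]
  have hwb : w b = 0 := by simp [hw, hvb, hφb]
  have hwne : (∫ x in a..b, w x^2 * gauss x) ≠ 0 := ne_of_gt ht
  have hderivw : deriv w = fun x => deriv v x + t * deriv φ x := funext fun x => by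
    have h1 : HasDerivAt v (deriv v x) x := (hv.differentiable one_ne_zero x).hasDerivAt
    have h2 : HasDerivAt φ (deriv φ x) x := (hφ.differentiable one_ne_zero x).hasDerivAt
    exact (h1.add (h2.const_mul t)).deriv
  have hq := hlb w hwcd hwa hwb hwne
  rw [hderivw] at hq
  exact (le_div_iff₀ ht).mp hq

lemma byparts (a b μ : ℝ) (u φ : ℝ → ℝ) (hu : Continuous u) (hφ : ContDiff ℝ 1 φ) :
    (∫ x in a..b, (μ * ∫ t in a..x, u t * gauss t) * deriv φ x)
      = (μ * ∫ t in a..b, u t * gauss t) * φ b - μ * ∫ x in a..b, u x * φ x * gauss x := by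
  have hcont : Continuous (fun x => u x * gauss x) := hu.mul continuous_gauss
  set g : ℝ → ℝ := fun x => μ * ∫ t in a..x, u t * gauss t with hg
  have hgc : Continuous g := continuous_const.mul (contDiff_primitive a _ hcont).continuous
  have hF : ∀ x : ℝ, HasDerivAt (fun y => g y * φ y)
      (μ * (u x * gauss x) * φ x + g x * deriv φ x) x := fun x =>
    (((hasDerivAt_primitive a _ hcont x).const_mul μ).mul
      ((hφ.differentiable one_ne_zero x).hasDerivAt))
  have hF' : Continuous (fun x => μ * (u x * gauss x) * φ x + g x * deriv φ x) :=
    ((continuous_const.mul hcont).mul hφ.continuous).add (hgc.mul (hφ.continuous_deriv le_rfl))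
  have hftc := ftc a b _ _ hF hF'
  have e1 : (fun x => μ * (u x * gauss x) * φ x + g x * deriv φ x)
      = fun x => μ * (u x * φ x * gauss x) + 1 * (g x * deriv φ x) :=
    funext fun x => by ring
  rw [e1, integral_split a b μ 1 (fun x => u x * φ x * gauss x) (fun x => g x * deriv φ x) ((hu.mul hφ.continuous).mul continuous_gauss)
    (hgc.mul (hφ.continuous_deriv le_rfl))] at hftc
  have hga : g a = 0 := by simp [hg, integral_same]
  rw [hga] at hftc
  have : g b = μ * ∫ t in a..b, u t * gauss t := rfl
  rw [this] at hftc
  linarith [hftc]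

lemma neumann_dir (a b μ : ℝ) (hab : a < b) (u : ℝ → ℝ) (hu : ContDiff ℝ 1 u)
    (hmean : (∫ x in a..b, u x * gauss x) = 0)
    (hne : (∫ x in a..b, u x^2 * gauss x) ≠ 0)
    (hq : μ = (∫ x in a..b, (deriv u x)^2 * gauss x) / (∫ x in a..b, u x^2 * gauss x))
    (hlb : ∀ φ : ℝ → ℝ, ContDiff ℝ 1 φ → (∫ x in a..b, φ x * gauss x) = 0 →
      (∫ x in a..b, φ x^2 * gauss x) ≠ 0 →
      μ ≤ (∫ x in a..b, (deriv φ x)^2 * gauss x) / (∫ x in a..b, φ x^2 * gauss x)) :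
    ∃ v : ℝ → ℝ, ContDiff ℝ 1 v ∧ v a = 0 ∧ v b = 0 ∧
      (∫ x in a..b, v x^2 * gauss x) ≠ 0 ∧
      μ - 1 = (∫ x in a..b, (deriv v x)^2 * gauss x) / (∫ x in a..b, v x^2 * gauss x) := by
  have hucont : Continuous u := hu.continuous
  have hducont : Continuous (deriv u) := hu.continuous_deriv le_rfl
  have hD : 0 < ∫ x in a..b, u x^2 * gauss x :=
    lt_of_le_of_ne (integral_nonneg hab.le (fun x _ => mul_nonneg (sq_nonneg _) (gauss_pos x).le))
      (Ne.symm hne)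
  have hND : (∫ x in a..b, (deriv u x)^2 * gauss x) = μ * ∫ x in a..b, u x^2 * gauss x := by
    rw [hq]; field_simp
  have hγpos : 0 < ∫ x in a..b, gauss x :=
    intervalIntegral_pos_of_pos (continuous_gauss.intervalIntegrable a b) gauss_pos hab
  have hNnn : 0 ≤ ∫ x in a..b, (deriv u x)^2 * gauss x :=
    integral_nonneg hab.le (fun x _ => mul_nonneg (sq_nonneg _) (gauss_pos x).le)
  have hμnn : 0 ≤ μ := by rw [hq]; exact div_nonneg hNnn hD.le
  -- μ is strictly positive
  have hμpos : 0 < μ := by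
    rcases eq_or_lt_of_le hμnn with h0 | h; swap
    · exact h
    exfalso
    have hN0 : (∫ x in a..b, (deriv u x)^2 * gauss x) = 0 := by rw [hND, ← h0]; ring
    have hdu0 : ∀ x ∈ Icc a b, deriv u x = 0 := by
      have hz := eq_zero_of_integral_zero a b hab (fun x => (deriv u x)^2 * gauss x)
        ((hducont.pow 2).mul continuous_gauss)
        (fun x => mul_nonneg (sq_nonneg _) (gauss_pos x).le) hN0
      intro x hx
      have h1 := hz x hx
      have h2 : (deriv u x)^2 = 0 := by
        by_contra h3
        exact h3 (by
          rcases mul_eq_zero.mp h1 with h4 | h4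
          · exact h4
          · exact absurd h4 (gauss_pos x).ne')
      exact sq_eq_zero_iff.mp h2
    have huconst : ∀ x ∈ Icc a b, u x = u a := by
      intro x hx
      have hftc : (∫ t in a..x, deriv u t) = u x - u a :=
        integral_eq_sub_of_hasDerivAt (fun t _ => (hu.differentiable one_ne_zero t).hasDerivAt)
          (hducont.intervalIntegrable _ _)
      have hzero : (∫ t in a..x, deriv u t) = 0 := by
        rw [integral_congr (g := fun _ => (0:ℝ)) (by
          intro t ht
          rw [uIcc_of_le hx.1] at ht
          exact hdu0 t ⟨ht.1, le_trans ht.2 hx.2⟩)]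
        simp
      linarith
    have hu0 : u a = 0 := by
      have e1 : (∫ x in a..b, u x * gauss x) = ∫ x in a..b, u a * gauss x :=
        integral_congr_Icc hab.le (fun x hx => by rw [huconst x hx])
      rw [e1, intervalIntegral.integral_const_mul] at hmean
      rcases mul_eq_zero.mp hmean with h | h
      · exact h
      · exact absurd h hγpos.ne'
    apply hne
    rw [integral_congr_Icc hab.le (g := fun _ => (0:ℝ))
      (fun x hx => by rw [huconst x hx, hu0]; ring)]
    simp
  -- Euler-Lagrange
  have EL := EL_neumann a b μ hab u hu hmean hD hlb hND
  have hcontuγ : Continuous (fun x => u x * gauss x) := hucont.mul continuous_gauss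
  set g : ℝ → ℝ := fun x => μ * ∫ t in a..x, u t * gauss t with hgdef
  have hgc : Continuous g := continuous_const.mul (contDiff_primitive a _ hcontuγ).continuous
  have hga : g a = 0 := by simp [hgdef, integral_same]
  have hgb : g b = 0 := by
    simp only [hgdef]
    rw [hmean]; ring
  -- the function G := u' γ + g vanishes identically on [a,b]
  set G : ℝ → ℝ := fun x => deriv u x * gauss x + g x with hGdef
  have hGc : Continuous G := (hducont.mul continuous_gauss).add hgc
  have hGzero : ∀ φ : ℝ → ℝ, ContDiff ℝ 1 φ → φ a = 0 → φ b = 0 →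
      (∫ x in a..b, G x * deriv φ x) = 0 := by
    intro φ hφ hφa hφb
    have hdφc : Continuous (deriv φ) := hφ.continuous_deriv le_rfl
    have e1 : (fun x => G x * deriv φ x)
        = fun x => 1 * (deriv u x * deriv φ x * gauss x) + 1 * (g x * deriv φ x) :=
      funext fun x => by simp only [hGdef]; ring
    rw [e1, integral_split a b 1 1 (fun x => deriv u x * deriv φ x * gauss x) (fun x => g x * deriv φ x) (((hducont.mul hdφc)).mul continuous_gauss)
      (hgc.mul hdφc), EL φ hφ, byparts a b μ u φ hucont hφ, hφb]
    ring
  have hGint : (∫ x in a..b, G x) = 0 := by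
    have e1 : (fun x => G x)
        = fun x => 1 * (deriv u x * deriv (fun y : ℝ => y) x * gauss x)
            + 1 * ((μ * ∫ t in a..x, u t * gauss t) * deriv (fun y : ℝ => y) x) := by
      funext x
      simp only [hGdef, hgdef, deriv_id'']
      ring
    rw [e1, integral_split a b 1 1 (fun x => deriv u x * deriv (fun y : ℝ => y) x * gauss x)
        (fun x => (μ * ∫ t in a..x, u t * gauss t) * deriv (fun y : ℝ => y) x) (by
        have : Continuous (fun x => deriv u x * deriv (fun y : ℝ => y) x * gauss x) := by
          simp only [deriv_id'']
          exact (hducont.mul continuous_const).mul continuous_gauss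
        exact this)
      (by
        simp only [deriv_id'']
        exact hgc.mul continuous_const),
      EL (fun y : ℝ => y) contDiff_id, byparts a b μ u (fun y : ℝ => y) hucont contDiff_id]
    have : (μ * ∫ t in a..b, u t * gauss t) = 0 := by rw [hmean]; ring
    rw [this]
    ring
  have hG0 : ∀ x ∈ Icc a b, G x = 0 := by
    intro x hx
    have := dBR a b hab G hGc hGzero x hx
    rw [hGint] at this
    simpa using this
  -- define the Dirichlet test function v = -g * exp(x^2/2), which equals u' on [a,b]
  set v : ℝ → ℝ := fun x => -(g x) * Real.exp (x^2/2) with hvdef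
  have hvcd : ContDiff ℝ 1 v :=
    ((contDiff_const.mul (contDiff_primitive a _ hcontuγ)).neg).mul contDiff_expsq
  have hvcont : Continuous v := hvcd.continuous
  have hva : v a = 0 := by simp [hvdef, hga]
  have hvb : v b = 0 := by simp [hvdef, hgb]
  have hvder : ∀ x : ℝ, HasDerivAt v (x * v x - μ * u x) x := by
    intro x
    have hgP : HasDerivAt g (μ * (u x * gauss x)) x :=
      (hasDerivAt_primitive a _ hcontuγ x).const_mul μ
    have hder := (hgP.neg).mul (hasDerivAt_expsq x)
    have heq : -(μ * (u x * gauss x)) * Real.exp (x^2/2) + -(g x) * (x * Real.exp (x^2/2))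
        = x * v x - μ * u x := by
      have h2 := gauss_mul_expsq x
      simp only [hvdef]
      linear_combination (-(μ * u x)) * h2
    replace hder := hder.congr_deriv heq
    exact hder
  have hdv : deriv v = fun x => x * v x - μ * u x := funext fun x => (hvder x).deriv
  have hvIcc : ∀ x ∈ Icc a b, v x = deriv u x := by
    intro x hx
    have h1 := hG0 x hx
    simp only [hGdef] at h1
    have h2 := gauss_mul_expsq x
    simp only [hvdef]
    linear_combination (-(Real.exp (x^2/2))) * h1 + deriv u x * h2
  -- denominator: ∫ v² γ = μ D
  have hEv : (∫ x in a..b, v x^2 * gauss x) = μ * ∫ x in a..b, u x^2 * gauss x := by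
    rw [integral_congr_Icc hab.le (g := fun x => (deriv u x)^2 * gauss x)
      (fun x hx => by rw [hvIcc x hx])]
    exact hND
  have hEvpos : 0 < ∫ x in a..b, v x^2 * gauss x := by rw [hEv]; exact mul_pos hμpos hD
  -- identity (I): ∫ x v² γ = 2 μ ∫ u v γ
  have hELv := EL v hvcd
  rw [hdv] at hELv
  have hLHSv : (∫ x in a..b, deriv u x * (x * v x - μ * u x) * gauss x)
      = 1 * (∫ x in a..b, x * v x^2 * gauss x) + (-μ) * ∫ x in a..b, u x * v x * gauss x := by
    rw [integral_congr_Icc hab.le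
      (g := fun x => 1 * (x * v x^2 * gauss x) + (-μ) * (u x * v x * gauss x))
      (fun x hx => by rw [← hvIcc x hx]; ring)]
    exact integral_split a b 1 (-μ) _ _
      ((continuous_id.mul (hvcont.pow 2)).mul continuous_gauss)
      ((hucont.mul hvcont).mul continuous_gauss)
  rw [hLHSv] at hELv
  -- identity (II): ∫ x² v² γ = 2 μ ∫ x u v γ - ∫ v² γ
  have hφxv : ContDiff ℝ 1 (fun x => x * v x) := contDiff_id.mul hvcd
  have hELxv := EL (fun x => x * v x) hφxv
  have hdxv : deriv (fun x => x * v x) = fun x => 1 * v x + x * (x * v x - μ * u x) :=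
    funext fun x => ((hasDerivAt_id x).mul (hvder x)).deriv
  rw [hdxv] at hELxv
  have hLHSxv : (∫ x in a..b, deriv u x * (1 * v x + x * (x * v x - μ * u x)) * gauss x)
      = 1 * (∫ x in a..b, v x^2 * gauss x) + 1 * (∫ x in a..b, x^2 * v x^2 * gauss x)
        + (-μ) * ∫ x in a..b, x * u x * v x * gauss x := by
    rw [integral_congr_Icc hab.le
      (g := fun x => 1 * (v x^2 * gauss x) + 1 * (x^2 * v x^2 * gauss x)
        + (-μ) * (x * u x * v x * gauss x))
      (fun x hx => by rw [← hvIcc x hx]; ring)]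
    exact integral_split3 a b 1 1 (-μ) _ _ _
      ((hvcont.pow 2).mul continuous_gauss)
      (((continuous_id.pow 2).mul (hvcont.pow 2)).mul continuous_gauss)
      (((continuous_id.mul hucont).mul hvcont).mul continuous_gauss)
  rw [hLHSxv] at hELxv
  have hRHSxv : (∫ x in a..b, u x * (x * v x) * gauss x)
      = ∫ x in a..b, x * u x * v x * gauss x :=
    integral_congr (fun x _ => by ring)
  rw [hRHSxv] at hELxv
  -- numerator: ∫ (v')² γ = (μ - 1) ∫ v² γ
  have hNv : (∫ x in a..b, (deriv v x)^2 * gauss x)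
      = (μ - 1) * ∫ x in a..b, v x^2 * gauss x := by
    rw [hdv]
    have e1 : (fun x => (x * v x - μ * u x)^2 * gauss x)
        = fun x => 1 * (x^2 * v x^2 * gauss x) + (-(2*μ)) * (x * u x * v x * gauss x)
          + μ^2 * (u x^2 * gauss x) := funext fun x => by ring
    have e2 := integral_split3 a b 1 (-(2*μ)) (μ^2) (fun x => x^2 * v x^2 * gauss x)
      (fun x => x * u x * v x * gauss x) (fun x => u x^2 * gauss x)
      (((continuous_id.pow 2).mul (hvcont.pow 2)).mul continuous_gauss)
      (((continuous_id.mul hucont).mul hvcont).mul continuous_gauss)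
      ((hucont.pow 2).mul continuous_gauss)
    rw [e1, e2]
    linear_combination hELxv - μ * hEv
  refine ⟨v, hvcd, hva, hvb, hEvpos.ne', ?_⟩
  rw [hNv, mul_div_assoc, div_self hEvpos.ne', mul_one]

lemma dirichlet_dir (a b lam : ℝ) (hab : a < b) (v : ℝ → ℝ) (hv : ContDiff ℝ 1 v)
    (hva : v a = 0) (hvb : v b = 0)
    (hne : (∫ x in a..b, v x^2 * gauss x) ≠ 0)
    (hq : lam = (∫ x in a..b, (deriv v x)^2 * gauss x) / (∫ x in a..b, v x^2 * gauss x))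
    (hlb : ∀ φ : ℝ → ℝ, ContDiff ℝ 1 φ → φ a = 0 → φ b = 0 →
      (∫ x in a..b, φ x^2 * gauss x) ≠ 0 →
      lam ≤ (∫ x in a..b, (deriv φ x)^2 * gauss x) / (∫ x in a..b, φ x^2 * gauss x)) :
    ∃ w : ℝ → ℝ, ContDiff ℝ 1 w ∧ (∫ x in a..b, w x * gauss x) = 0 ∧
      (∫ x in a..b, w x^2 * gauss x) ≠ 0 ∧
      lam + 1 = (∫ x in a..b, (deriv w x)^2 * gauss x) / (∫ x in a..b, w x^2 * gauss x) := by
  have hvcont : Continuous v := hv.continuous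
  have hdvcont : Continuous (deriv v) := hv.continuous_deriv le_rfl
  have hD : 0 < ∫ x in a..b, v x^2 * gauss x :=
    lt_of_le_of_ne (integral_nonneg hab.le (fun x _ => mul_nonneg (sq_nonneg _) (gauss_pos x).le))
      (Ne.symm hne)
  have hND : (∫ x in a..b, (deriv v x)^2 * gauss x) = lam * ∫ x in a..b, v x^2 * gauss x := by
    rw [hq]; field_simp
  have hNnn : 0 ≤ ∫ x in a..b, (deriv v x)^2 * gauss x :=
    integral_nonneg hab.le (fun x _ => mul_nonneg (sq_nonneg _) (gauss_pos x).le)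
  have hlamnn : 0 ≤ lam := by rw [hq]; exact div_nonneg hNnn hD.le
  have EL := EL_dirichlet a b lam hab v hv hva hvb hD hlb hND
  have hcontvγ : Continuous (fun x => v x * gauss x) := hvcont.mul continuous_gauss
  set h : ℝ → ℝ := fun x => lam * ∫ t in a..x, v t * gauss t with hhdef
  have hhc : Continuous h := continuous_const.mul (contDiff_primitive a _ hcontvγ).continuous
  set G : ℝ → ℝ := fun x => deriv v x * gauss x + h x with hGdef
  have hGc : Continuous G := (hdvcont.mul continuous_gauss).add hhc
  have hGzero : ∀ φ : ℝ → ℝ, ContDiff ℝ 1 φ → φ a = 0 → φ b = 0 →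
      (∫ x in a..b, G x * deriv φ x) = 0 := by
    intro φ hφ hφa hφb
    have hdφc : Continuous (deriv φ) := hφ.continuous_deriv le_rfl
    have e1 : (fun x => G x * deriv φ x)
        = fun x => 1 * (deriv v x * deriv φ x * gauss x) + 1 * (h x * deriv φ x) :=
      funext fun x => by simp only [hGdef]; ring
    rw [e1, integral_split a b 1 1 (fun x => deriv v x * deriv φ x * gauss x) (fun x => h x * deriv φ x) (((hdvcont.mul hdφc)).mul continuous_gauss)
      (hhc.mul hdφc), EL φ hφ hφa hφb, byparts a b lam v φ hvcont hφ, hφb]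
    ring
  set c : ℝ := (∫ y in a..b, G y) / (b - a) with hcdef
  have hG0 : ∀ x ∈ Icc a b, G x = c := dBR a b hab G hGc hGzero
  -- V equals v' on [a,b] and is globally C¹
  set V : ℝ → ℝ := fun x => (c - h x) * Real.exp (x^2/2) with hVdef
  have hVcd : ContDiff ℝ 1 V :=
    ((contDiff_const.sub (contDiff_const.mul (contDiff_primitive a _ hcontvγ))).mul contDiff_expsq)
  have hVcont : Continuous V := hVcd.continuous
  have hVder : ∀ x : ℝ, HasDerivAt V (x * V x - lam * v x) x := by
    intro x
    have hhP : HasDerivAt h (lam * (v x * gauss x)) x :=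
      (hasDerivAt_primitive a _ hcontvγ x).const_mul lam
    have hder := ((hasDerivAt_const x c).sub hhP).mul (hasDerivAt_expsq x)
    have heq : (0 - lam * (v x * gauss x)) * Real.exp (x^2/2)
        + (c - h x) * (x * Real.exp (x^2/2)) = x * V x - lam * v x := by
      have h2 := gauss_mul_expsq x
      simp only [hVdef]
      linear_combination (-(lam * v x)) * h2
    replace hder := hder.congr_deriv heq
    exact hder
  have hVIcc : ∀ x ∈ Icc a b, V x = deriv v x := by
    intro x hx
    have h1 := hG0 x hx
    simp only [hGdef] at h1
    have h2 := gauss_mul_expsq x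
    simp only [hVdef]
    linear_combination (-(Real.exp (x^2/2))) * h1 + deriv v x * h2
  -- the Neumann test function w = x v - V
  set w : ℝ → ℝ := fun x => x * v x - V x with hwdef
  have hwcd : ContDiff ℝ 1 w := (contDiff_id.mul hv).sub hVcd
  have hwcont : Continuous w := hwcd.continuous
  have hvd : ∀ x : ℝ, HasDerivAt v (deriv v x) x := fun x => (hv.differentiable one_ne_zero x).hasDerivAt
  have hwder : ∀ x : ℝ, HasDerivAt w (1 * v x + x * deriv v x - (x * V x - lam * v x)) x :=
    fun x => ((hasDerivAt_id x).mul (hvd x)).sub (hVder x)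
  have hdw : deriv w = fun x => 1 * v x + x * deriv v x - (x * V x - lam * v x) :=
    funext fun x => (hwder x).deriv
  have hdwIcc : ∀ x ∈ Icc a b, deriv w x = (1 + lam) * v x := by
    intro x hx
    rw [hdw]
    simp only
    rw [← hVIcc x hx]
    ring
  -- w has Gaussian mean zero
  have hftcvγ : (∫ x in a..b, (deriv v x * gauss x + v x * (-x * gauss x))) = 0 := by
    rw [ftc a b (fun x => v x * gauss x) _ (fun x => (hvd x).mul (hasDerivAt_gauss x))
      ((hdvcont.mul continuous_gauss).add
        (show Continuous (fun x : ℝ => v x * (-x * gauss x)) from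
          hvcont.mul ((continuous_id.neg).mul continuous_gauss)))]
    rw [hva, hvb]
    ring
  have hwmean : (∫ x in a..b, w x * gauss x) = 0 := by
    rw [integral_congr_Icc hab.le
      (g := fun x => (-1) * (deriv v x * gauss x + v x * (-x * gauss x)))
      (fun x hx => by simp only [hwdef]; rw [← hVIcc x hx]; ring)]
    rw [intervalIntegral.integral_const_mul, hftcvγ]
    ring
  -- denominator: ∫ w² γ = (1+lam) ∫ v² γ
  have hP : ∀ x : ℝ, HasDerivAt (fun y => y * v y ^ 2 * gauss y)
      ((1 * v x ^ 2 + x * (2 * v x ^ 1 * deriv v x)) * gauss x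
        + x * v x ^ 2 * (-x * gauss x)) x := by
    intro x
    have h1 : HasDerivAt (fun y => v y ^ 2) ((2 : ℕ) * v x ^ 1 * deriv v x) x := (hvd x).pow 2
    have h2 := (hasDerivAt_id x).mul h1
    have h3 := h2.mul (hasDerivAt_gauss x)
    simpa using (show HasDerivAt (fun y => y * v y ^ 2 * gauss y) _ x from h3)
  have hftcP : (∫ x in a..b, ((1 * v x ^ 2 + x * (2 * v x ^ 1 * deriv v x)) * gauss x
      + x * v x ^ 2 * (-x * gauss x))) = 0 := by
    rw [ftc a b (fun y => y * v y ^ 2 * gauss y) _ hP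
      (by
        have : Continuous (fun x : ℝ => (1 * v x ^ 2 + x * (2 * v x ^ 1 * deriv v x)) * gauss x
            + x * v x ^ 2 * (-x * gauss x)) := by
          apply Continuous.add
          · exact ((continuous_const.mul (hvcont.pow 2)).add
              (continuous_id.mul ((continuous_const.mul (hvcont.pow 1)).mul hdvcont))).mul
              continuous_gauss
          · exact ((continuous_id.mul (hvcont.pow 2))).mul
              ((continuous_id.neg).mul continuous_gauss)
        exact this)]
    rw [hva, hvb]
    ring
  have hsplitP : (∫ x in a..b, ((1 * v x ^ 2 + x * (2 * v x ^ 1 * deriv v x)) * gauss x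
      + x * v x ^ 2 * (-x * gauss x)))
      = 1 * (∫ x in a..b, v x ^ 2 * gauss x)
        + 2 * (∫ x in a..b, x * v x * deriv v x * gauss x)
        + (-1) * ∫ x in a..b, x ^ 2 * v x ^ 2 * gauss x := by
    have e1 : (fun x => ((1 * v x ^ 2 + x * (2 * v x ^ 1 * deriv v x)) * gauss x
        + x * v x ^ 2 * (-x * gauss x)))
        = fun x => 1 * (v x ^ 2 * gauss x) + 2 * (x * v x * deriv v x * gauss x)
          + (-1) * (x ^ 2 * v x ^ 2 * gauss x) := funext fun x => by ring
    rw [e1]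
    exact integral_split3 a b 1 2 (-1) (fun x => v x ^ 2 * gauss x)
      (fun x => x * v x * deriv v x * gauss x) (fun x => x ^ 2 * v x ^ 2 * gauss x)
      ((hvcont.pow 2).mul continuous_gauss)
      (((continuous_id.mul hvcont).mul hdvcont).mul continuous_gauss)
      (((continuous_id.pow 2).mul (hvcont.pow 2)).mul continuous_gauss)
  have hX : 2 * (∫ x in a..b, x * v x * deriv v x * gauss x)
      = (∫ x in a..b, x ^ 2 * v x ^ 2 * gauss x) - ∫ x in a..b, v x ^ 2 * gauss x := by
    rw [hsplitP] at hftcP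
    linarith
  have hDw : (∫ x in a..b, w x ^ 2 * gauss x) = (1 + lam) * ∫ x in a..b, v x ^ 2 * gauss x := by
    have e1 : (∫ x in a..b, w x ^ 2 * gauss x)
        = 1 * (∫ x in a..b, x ^ 2 * v x ^ 2 * gauss x)
          + (-2) * (∫ x in a..b, x * v x * deriv v x * gauss x)
          + 1 * ∫ x in a..b, (deriv v x) ^ 2 * gauss x := by
      rw [integral_congr_Icc hab.le
        (g := fun x => 1 * (x ^ 2 * v x ^ 2 * gauss x) + (-2) * (x * v x * deriv v x * gauss x)
          + 1 * ((deriv v x) ^ 2 * gauss x))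
        (fun x hx => by simp only [hwdef]; rw [← hVIcc x hx]; ring)]
      exact integral_split3 a b 1 (-2) 1 (fun x => x ^ 2 * v x ^ 2 * gauss x)
        (fun x => x * v x * deriv v x * gauss x) (fun x => (deriv v x) ^ 2 * gauss x)
        (((continuous_id.pow 2).mul (hvcont.pow 2)).mul continuous_gauss)
        (((continuous_id.mul hvcont).mul hdvcont).mul continuous_gauss)
        ((hdvcont.pow 2).mul continuous_gauss)
    rw [e1, hND]
    linarith [hX]
  have hDwpos : 0 < ∫ x in a..b, w x ^ 2 * gauss x := by
    rw [hDw]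
    exact mul_pos (by linarith) hD
  have hNw : (∫ x in a..b, (deriv w x) ^ 2 * gauss x)
      = (1 + lam) ^ 2 * ∫ x in a..b, v x ^ 2 * gauss x := by
    rw [integral_congr_Icc hab.le (g := fun x => (1 + lam) ^ 2 * (v x ^ 2 * gauss x))
      (fun x hx => by rw [hdwIcc x hx]; ring), intervalIntegral.integral_const_mul]
  refine ⟨w, hwcd, hwmean, hDwpos.ne', ?_⟩
  rw [hNw, hDw, show (1 + lam) ^ 2 * (∫ x in a..b, v x ^ 2 * gauss x)
      = (lam + 1) * ((1 + lam) * ∫ x in a..b, v x ^ 2 * gauss x) by ring,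
    mul_div_assoc, div_self (by positivity : (1 + lam) * (∫ x in a..b, v x ^ 2 * gauss x) ≠ 0),
    mul_one]

/-- For an interval `(a,b)`, the first nontrivial Neumann eigenvalue `μ₁` of
`−u'' + x u' = μ u` (variationally: the minimum of the Gaussian Rayleigh quotient
over nonzero mean-zero functions) and the first Dirichlet eigenvalue `λ₁`
(minimum of the Rayleigh quotient over nonzero functions vanishing at `a` and `b`)
satisfy `μ₁ = lam₁ + 1`. -/
theorem neumann_eq_dirichlet_add_one (a b : ℝ) (hab : a < b) (μ₁ lam₁ : ℝ)
    (hμ : IsLeast { q : ℝ | ∃ u : ℝ → ℝ, ContDiff ℝ 1 u ∧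
        (∫ x in (a)..(b), u x * Real.exp (-x ^ 2 / 2)) = 0 ∧
        (∫ x in (a)..(b), (u x) ^ 2 * Real.exp (-x ^ 2 / 2)) ≠ 0 ∧
        q = (∫ x in (a)..(b), (deriv u x) ^ 2 * Real.exp (-x ^ 2 / 2)) /
            (∫ x in (a)..(b), (u x) ^ 2 * Real.exp (-x ^ 2 / 2)) } μ₁)
    (hlam : IsLeast { q : ℝ | ∃ v : ℝ → ℝ, ContDiff ℝ 1 v ∧
        v a = 0 ∧ v b = 0 ∧
        (∫ x in (a)..(b), (v x) ^ 2 * Real.exp (-x ^ 2 / 2)) ≠ 0 ∧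
        q = (∫ x in (a)..(b), (deriv v x) ^ 2 * Real.exp (-x ^ 2 / 2)) /
            (∫ x in (a)..(b), (v x) ^ 2 * Real.exp (-x ^ 2 / 2)) } lam₁) :
    μ₁ = lam₁ + 1 := by
  have hgr : ∀ x : ℝ, Real.exp (-x ^ 2 / 2) = gauss x := fun _ => rfl
  simp only [hgr] at hμ hlam
  obtain ⟨⟨u, hu, humean, hune, huq⟩, hμlb⟩ := hμ
  obtain ⟨⟨v, hv, hva, hvb, hvne, hvq⟩, hLlb⟩ := hlam
  have hlbN : ∀ φ : ℝ → ℝ, ContDiff ℝ 1 φ → (∫ x in a..b, φ x * gauss x) = 0 →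
      (∫ x in a..b, φ x ^ 2 * gauss x) ≠ 0 →
      μ₁ ≤ (∫ x in a..b, (deriv φ x) ^ 2 * gauss x) / (∫ x in a..b, φ x ^ 2 * gauss x) :=
    fun φ hφ h1 h2 => hμlb ⟨φ, hφ, h1, h2, rfl⟩
  have hlbD : ∀ φ : ℝ → ℝ, ContDiff ℝ 1 φ → φ a = 0 → φ b = 0 →
      (∫ x in a..b, φ x ^ 2 * gauss x) ≠ 0 →
      lam₁ ≤ (∫ x in a..b, (deriv φ x) ^ 2 * gauss x) / (∫ x in a..b, φ x ^ 2 * gauss x) :=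
    fun φ hφ h0 h1 h2 => hLlb ⟨φ, hφ, h0, h1, h2, rfl⟩
  obtain ⟨v₁, p1, p2, p3, p4, p5⟩ := neumann_dir a b μ₁ hab u hu humean hune huq hlbN
  obtain ⟨w₁, q1, q2, q3, q4⟩ := dirichlet_dir a b lam₁ hab v hv hva hvb hvne hvq hlbD
  have h1 : lam₁ ≤ μ₁ - 1 := hLlb ⟨v₁, p1, p2, p3, p4, p5⟩
  have h2 : μ₁ ≤ lam₁ + 1 := hμlb ⟨w₁, q1, q2, q3, q4⟩
  linarith
end

section
/- Let g solve g'' + τ g < 0 on (r₀, R) with g(r₀) = 0, g'(R) = 0, g < 0 on (r₀,R), and τ > 0. Then τ > π²/(4(R − r₀)²). -/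
open Real Set

/-- If `g` solves `g'' + τ g < 0` on `(r₀, R)` with `g(r₀) = 0`, `g'(R) = 0`,
`g < 0` on `(r₀, R)` and `τ > 0`, then `τ > π²/(4(R − r₀)²)`. -/
theorem tau_gt_pi_sq (r₀ R τ : ℝ) (hrR : r₀ < R) (hτ : 0 < τ) (g : ℝ → ℝ)
    (hg : ContDiff ℝ 2 g)
    (hg0 : g r₀ = 0) (hgR : deriv g R = 0)
    (hg_neg : ∀ r ∈ Ioo r₀ R, g r < 0)
    (hg_ineq : ∀ r ∈ Ioo r₀ R, deriv (deriv g) r + τ * g r < 0) :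
    Real.pi ^ 2 / (4 * (R - r₀) ^ 2) < τ := by
  by_contra hcon
  push_neg at hcon
  have hLpos : 0 < R - r₀ := sub_pos.mpr hrR
  set ω := Real.sqrt τ with hω
  have hωpos : 0 < ω := Real.sqrt_pos.mpr hτ
  have hωsq : ω ^ 2 = τ := Real.sq_sqrt hτ.le
  -- ω * (R - r₀) ≤ π / 2
  have hωL : ω * (R - r₀) ≤ π / 2 := by
    have h1 : τ * (R - r₀) ^ 2 ≤ π ^ 2 / 4 := by
      rw [le_div_iff₀ (by positivity)] at hcon
      nlinarith
    have h2 : ω * (R - r₀) = Real.sqrt (τ * (R - r₀) ^ 2) := by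
      rw [Real.sqrt_mul hτ.le, Real.sqrt_sq hLpos.le]
    have h3 : Real.sqrt (τ * (R - r₀) ^ 2) ≤ Real.sqrt (π ^ 2 / 4) :=
      Real.sqrt_le_sqrt h1
    have h4 : Real.sqrt (π ^ 2 / 4) = π / 2 := by
      rw [show (π : ℝ) ^ 2 / 4 = (π / 2) ^ 2 by ring, Real.sqrt_sq (by positivity)]
    rw [h2]; rw [h4] at h3; exact h3
  -- derivatives of sin/cos comparison function
  have hu : ∀ r : ℝ, HasDerivAt (fun r => ω * (r - r₀)) ω r := by
    intro r
    simpa using ((hasDerivAt_id r).sub_const r₀).const_mul ω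
  have hh : ∀ r : ℝ, HasDerivAt (fun r => Real.sin (ω * (r - r₀)))
      (ω * Real.cos (ω * (r - r₀))) r := by
    intro r
    have := (Real.hasDerivAt_sin (ω * (r - r₀))).comp r (hu r)
    exact this.congr_deriv (by ring)
  have hh' : ∀ r : ℝ, HasDerivAt (fun r => ω * Real.cos (ω * (r - r₀)))
      (-(τ * Real.sin (ω * (r - r₀)))) r := by
    intro r
    have := ((Real.hasDerivAt_cos (ω * (r - r₀))).comp r (hu r)).const_mul ω
    refine this.congr_deriv ?_
    rw [← hωsq]; ring
  -- regularity of g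
  have hg2 : ContDiff ℝ ((1 : ℕ) + 1) g := by exact_mod_cast hg
  have hgdiff : Differentiable ℝ g := hg.differentiable (by norm_num)
  have hgd1 : ContDiff ℝ 1 (deriv g) := (contDiff_succ_iff_deriv.mp hg2).2.2
  have hgd1' : Differentiable ℝ (deriv g) := hgd1.differentiable one_ne_zero
  -- the Wronskian
  set W : ℝ → ℝ := fun r =>
    deriv g r * Real.sin (ω * (r - r₀)) - g r * (ω * Real.cos (ω * (r - r₀))) with hWdef
  have hW : ∀ r : ℝ, HasDerivAt W
      ((deriv (deriv g) r + τ * g r) * Real.sin (ω * (r - r₀))) r := by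
    intro r
    have h1 : HasDerivAt (deriv g) (deriv (deriv g) r) r := (hgd1' r).hasDerivAt
    have h2 : HasDerivAt g (deriv g r) r := (hgdiff r).hasDerivAt
    have := (h1.mul (hh r)).sub (h2.mul (hh' r))
    refine this.congr_deriv ?_
    ring
  have hWd : Differentiable ℝ W := fun r => (hW r).differentiableAt
  -- the Wronskian is strictly decreasing on [r₀, R]
  have hanti : StrictAntiOn W (Icc r₀ R) := by
    apply strictAntiOn_of_deriv_neg (convex_Icc r₀ R) hWd.continuous.continuousOn
    intro r hr
    rw [interior_Icc] at hr
    rw [(hW r).deriv]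
    apply mul_neg_of_neg_of_pos (hg_ineq r hr)
    apply Real.sin_pos_of_pos_of_lt_pi
    · exact mul_pos hωpos (sub_pos.mpr hr.1)
    · have : ω * (r - r₀) < ω * (R - r₀) := by
        apply mul_lt_mul_of_pos_left _ hωpos
        linarith [hr.2]
      linarith [Real.pi_pos]
  have hWr₀ : W r₀ = 0 := by simp [hWdef, hg0]
  have hWR : W R < 0 := by
    have := hanti ⟨le_rfl, hrR.le⟩ ⟨hrR.le, le_rfl⟩ hrR
    rwa [hWr₀] at this
  -- but W R ≥ 0
  have hgR0 : g R ≤ 0 := by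
    have hcont : Filter.Tendsto g (nhdsWithin R (Iio R)) (nhds (g R)) :=
      hg.continuous.continuousWithinAt
    refine le_of_tendsto hcont ?_
    filter_upwards [Ioo_mem_nhdsLT_of_mem (⟨hrR, le_rfl⟩ : R ∈ Ioc r₀ R)] with r hr
    exact (hg_neg r hr).le
  have hcosnn : 0 ≤ Real.cos (ω * (R - r₀)) := by
    apply Real.cos_nonneg_of_mem_Icc
    constructor
    · have : (0:ℝ) ≤ ω * (R - r₀) := by positivity
      linarith [Real.pi_pos]
    · exact hωL
  have hWR' : 0 ≤ W R := by
    have : W R = -(g R) * (ω * Real.cos (ω * (R - r₀))) := by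
      simp [hWdef, hgR]
    rw [this]
    apply mul_nonneg (by linarith) (by positivity)
  linarith
end

section
/- In ℝ², the first nontrivial Neumann eigenvalue (with respect to Gaussian measure) of the square T = (√(3−√6), √(3+√6))² equals 5; in particular, u(x,y) = x⁵ − 10x³ + 15x is a nonconstant eigenfunction with Gaussian mean zero on T, satisfying −Δu + (x,y)·∇u = 5u in T and ∂u/∂ν = 0 on ∂T. -/
open Real Set MeasureTheory Filter Topology intervalIntegral

set_option maxHeartbeats 1000000

noncomputable section NESq

def rr (x : ℝ) : ℝ := Real.exp (-(x^2)/2)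
def g5 (x : ℝ) : ℝ := x^5 - 10*x^3 + 15*x
def g5p (x : ℝ) : ℝ := 5*x^4 - 30*x^2 + 15
def g5pp (x : ℝ) : ℝ := 20*x^3 - 60*x

def aa : ℝ := Real.sqrt (3 - Real.sqrt 6)
def bb : ℝ := Real.sqrt (3 + Real.sqrt 6)
def cc : ℝ := Real.sqrt (5 - Real.sqrt 10)

lemma s6 : Real.sqrt 6 ^ 2 = 6 := Real.sq_sqrt (by norm_num)
lemma s10 : Real.sqrt 10 ^ 2 = 10 := Real.sq_sqrt (by norm_num)
lemma s6nn : (0:ℝ) ≤ Real.sqrt 6 := Real.sqrt_nonneg 6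
lemma s10nn : (0:ℝ) ≤ Real.sqrt 10 := Real.sqrt_nonneg 10

lemma s6lt : Real.sqrt 6 < 3 := by nlinarith [s6, s6nn]
lemma s10lt : Real.sqrt 10 < 4 := by nlinarith [s10, s10nn]
lemma s6gt : 2 < Real.sqrt 6 := by nlinarith [s6, s6nn]
lemma s10gt : 3 < Real.sqrt 10 := by nlinarith [s10, s10nn]

lemma aa_sq : aa ^ 2 = 3 - Real.sqrt 6 := Real.sq_sqrt (by nlinarith [s6lt])
lemma bb_sq : bb ^ 2 = 3 + Real.sqrt 6 := Real.sq_sqrt (by nlinarith [s6nn])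
lemma cc_sq : cc ^ 2 = 5 - Real.sqrt 10 := Real.sq_sqrt (by nlinarith [s10lt])

lemma aa_pos : 0 < aa := Real.sqrt_pos.2 (by nlinarith [s6lt])
lemma cc_pos : 0 < cc := Real.sqrt_pos.2 (by nlinarith [s10lt])
lemma bb_pos : 0 < bb := Real.sqrt_pos.2 (by nlinarith [s6nn])

lemma aa_lt_cc : aa < cc := by
  have h : aa ^ 2 < cc ^ 2 := by rw [aa_sq, cc_sq]; nlinarith [s6gt, s10lt]
  nlinarith [aa_pos, cc_pos]

lemma cc_lt_bb : cc < bb := by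
  have h : cc ^ 2 < bb ^ 2 := by rw [bb_sq, cc_sq]; nlinarith [s6gt, s10nn]
  nlinarith [cc_pos, bb_pos]

lemma aa_lt_bb : aa < bb := aa_lt_cc.trans cc_lt_bb

lemma g5p_aa : g5p aa = 0 := by
  have h2 := aa_sq
  have h4 : aa ^ 4 = (3 - Real.sqrt 6)^2 := by rw [← h2]; ring
  simp only [g5p]; rw [h4, h2]; nlinarith [s6]

lemma g5p_bb : g5p bb = 0 := by
  have h2 := bb_sq
  have h4 : bb ^ 4 = (3 + Real.sqrt 6)^2 := by rw [← h2]; ring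
  simp only [g5p]; rw [h4, h2]; nlinarith [s6]

lemma eigen_id (x : ℝ) : g5pp x = x * g5p x - 5 * g5 x := by
  simp only [g5pp, g5p, g5]; ring

lemma hasDerivAt_rr (x : ℝ) : HasDerivAt rr (-x * rr x) x := by
  have h1 : HasDerivAt (fun x : ℝ => -(x^2)/2) (-x) x := by
    have := (hasDerivAt_pow 2 x).neg.div_const 2
    refine this.congr_deriv ?_; push_cast; ring
  show HasDerivAt (fun x => Real.exp (-(x^2)/2)) _ x
  simpa [rr, mul_comm] using h1.exp

lemma rr_pos (x : ℝ) : 0 < rr x := Real.exp_pos _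

lemma hasDerivAt_g5 (x : ℝ) : HasDerivAt g5 (g5p x) x := by
  have h : HasDerivAt (fun x : ℝ => x^5 - 10*x^3 + 15*x)
      ((5:ℕ) * x^4 - 10*((3:ℕ)*x^2) + 15*1) x := by
    exact ((hasDerivAt_pow 5 x).sub ((hasDerivAt_pow 3 x).const_mul 10)).add
      ((hasDerivAt_id x).const_mul 15)
  refine h.congr_deriv ?_; simp only [g5p]; push_cast; ring

lemma hasDerivAt_g5p (x : ℝ) : HasDerivAt g5p (g5pp x) x := by
  have h : HasDerivAt (fun x : ℝ => 5*x^4 - 30*x^2 + 15)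
      (5*((4:ℕ)*x^3) - 30*((2:ℕ)*x^1) + 0) x := by
    exact (((hasDerivAt_pow 4 x).const_mul 5).sub ((hasDerivAt_pow 2 x).const_mul 30)).add
      (hasDerivAt_const x 15)
  refine h.congr_deriv ?_; simp only [g5pp]; push_cast; ring

lemma cont_rr : Continuous rr := by unfold rr; fun_prop
lemma cont_g5 : Continuous g5 := by unfold g5; fun_prop
lemma cont_g5p : Continuous g5p := by unfold g5p; fun_prop

/-- antiderivative for `g5 * rr` -/
lemma int_g5_rr : ∫ x in aa..bb, g5 x * rr x = 0 := by
  have key : ∀ x ∈ uIcc aa bb, HasDerivAt (fun x => -(g5p x * rr x)/5) (g5 x * rr x) x := by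
    intro x _
    have h := ((hasDerivAt_g5p x).mul (hasDerivAt_rr x)).neg.div_const 5
    refine h.congr_deriv ?_
    rw [eigen_id]; ring
  have hcont : IntervalIntegrable (fun x => g5 x * rr x) volume aa bb :=
    (cont_g5.mul cont_rr).intervalIntegrable _ _
  rw [intervalIntegral.integral_eq_sub_of_hasDerivAt key hcont]
  rw [g5p_aa, g5p_bb]; ring

lemma int_g5p_sq : ∫ x in aa..bb, (g5p x)^2 * rr x = 5 * ∫ x in aa..bb, (g5 x)^2 * rr x := by
  have key : ∀ x ∈ uIcc aa bb, HasDerivAt (fun x => g5 x * g5p x * rr x)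
      ((g5p x)^2 * rr x - 5 * ((g5 x)^2 * rr x)) x := by
    intro x _
    have h := ((hasDerivAt_g5 x).mul (hasDerivAt_g5p x)).mul (hasDerivAt_rr x)
    refine h.congr_deriv ?_
    rw [eigen_id]; simp only [Pi.mul_apply]; ring
  have h1 : IntervalIntegrable (fun x => (g5p x)^2 * rr x) volume aa bb :=
    ((cont_g5p.pow 2).mul cont_rr).intervalIntegrable _ _
  have h2 : IntervalIntegrable (fun x => 5 * ((g5 x)^2 * rr x)) volume aa bb :=
    (continuous_const.mul ((cont_g5.pow 2).mul cont_rr)).intervalIntegrable _ _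
  have key2 := intervalIntegral.integral_eq_sub_of_hasDerivAt key (h1.sub h2)
  rw [intervalIntegral.integral_sub h1 h2, g5p_aa, g5p_bb] at key2
  have h5 : ∫ x in aa..bb, 5 * ((g5 x)^2 * rr x) = 5 * ∫ x in aa..bb, (g5 x)^2 * rr x :=
    intervalIntegral.integral_const_mul 5 _
  rw [h5] at key2
  have : g5 bb * 0 * rr bb - g5 aa * 0 * rr aa = 0 := by ring
  linarith [key2, this]

/-- factor of `g5` through its root `cc` -/
def BB (x : ℝ) : ℝ := x * (x + cc) * ((5 + Real.sqrt 10) - x^2)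

lemma cont_BB : Continuous BB := by unfold BB; fun_prop

lemma g5_eq (x : ℝ) : g5 x = (cc - x) * BB x := by
  simp only [g5, BB]
  linear_combination (x^3 - (5+Real.sqrt 10)*x) * cc_sq + x * s10

lemma BB_pos {x : ℝ} (h0 : 0 < x) (hxb : x ≤ bb) : 0 < BB x := by
  have h1 : 0 < x + cc := by linarith [cc_pos]
  have h2 : 0 < (5 + Real.sqrt 10) - x^2 := by nlinarith [bb_sq, s6lt, s10gt, bb_pos]
  exact mul_pos (mul_pos h0 h1) h2

lemma g5_pos_left {x : ℝ} (h1 : aa ≤ x) (h2 : x < cc) : 0 < g5 x := by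
  rw [g5_eq]
  exact mul_pos (by linarith) (BB_pos (lt_of_lt_of_le aa_pos h1) (by linarith [cc_lt_bb]))

lemma g5_neg_right {x : ℝ} (h1 : cc < x) (h2 : x ≤ bb) : g5 x < 0 := by
  rw [g5_eq]
  have := BB_pos (lt_trans cc_pos h1) h2
  nlinarith

/-- the Rayleigh density -/
def Dfun (h : ℝ → ℝ) (x : ℝ) : ℝ := (deriv h x)^2 * rr x - 5 * ((h x)^2 * rr x)

/-- the Riccati-type auxiliary function -/
def FF (h : ℝ → ℝ) (x : ℝ) : ℝ := rr x * g5p x * (h x)^2 / g5 x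

/-- integrand which is the derivative of `FF h` wherever `g5 ≠ 0` -/
def Fd (h : ℝ → ℝ) (x : ℝ) : ℝ :=
  Dfun h x - rr x * (deriv h x - g5p x * h x / g5 x)^2

lemma cont_Dfun {h : ℝ → ℝ} (hh : ContDiff ℝ 1 h) : Continuous (Dfun h) := by
  have hd : Continuous (deriv h) := hh.continuous_deriv le_rfl
  unfold Dfun
  exact ((hd.pow 2).mul cont_rr).sub
    (continuous_const.mul ((hh.continuous.pow 2).mul cont_rr))

lemma contOn_Fd {h : ℝ → ℝ} (hh : ContDiff ℝ 1 h) {s : Set ℝ}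
    (hs : ∀ x ∈ s, g5 x ≠ 0) : ContinuousOn (Fd h) s := by
  have hd : Continuous (deriv h) := hh.continuous_deriv le_rfl
  unfold Fd
  apply ((cont_Dfun hh).continuousOn).sub
  apply (cont_rr.continuousOn).mul
  apply ContinuousOn.pow
  apply (hd.continuousOn).sub
  exact ((cont_g5p.continuousOn).mul (hh.continuous.continuousOn)).div
    (cont_g5.continuousOn) hs

lemma hasDerivAt_FF {h : ℝ → ℝ} (hh : ContDiff ℝ 1 h) {x : ℝ} (hg : g5 x ≠ 0) :
    HasDerivAt (FF h) (Fd h x) x := by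
  have hD : HasDerivAt h (deriv h x) x := (hh.differentiable one_ne_zero x).hasDerivAt
  have hnum := ((hasDerivAt_rr x).mul (hasDerivAt_g5p x)).mul (hD.pow 2)
  have hF := hnum.div (hasDerivAt_g5 x) hg
  refine hF.congr_deriv ?_
  simp only [Fd, Dfun]
  rw [eigen_id x]
  simp only [Pi.mul_apply, Pi.pow_apply]
  field_simp
  ring

lemma Fd_le_Dfun {h : ℝ → ℝ} (x : ℝ) : Fd h x ≤ Dfun h x := by
  have := rr_pos x
  have := sq_nonneg (deriv h x - g5p x * h x / g5 x)
  simp only [Fd]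
  nlinarith

lemma half_left {h : ℝ → ℝ} (hh : ContDiff ℝ 1 h) (h0 : h cc = 0) :
    0 ≤ ∫ x in aa..cc, Dfun h x := by
  have hD_cc : HasDerivAt h (deriv h cc) cc := (hh.differentiable one_ne_zero cc).hasDerivAt
  -- integrability of Dfun
  have hDi : ∀ p q : ℝ, IntervalIntegrable (Dfun h) volume p q :=
    fun p q => (cont_Dfun hh).intervalIntegrable p q
  -- main estimate for t < cc
  have main : ∀ t ∈ Ioo aa cc, FF h t + ∫ x in t..cc, Dfun h x ≤ ∫ x in aa..cc, Dfun h x := by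
    intro t ht
    have hsub : Icc aa t ⊆ Ico aa cc := fun x hx => ⟨hx.1, lt_of_le_of_lt hx.2 ht.2⟩
    have hne : ∀ x ∈ Icc aa t, g5 x ≠ 0 := fun x hx =>
      ne_of_gt (g5_pos_left (hsub hx).1 (hsub hx).2)
    have hle : aa ≤ t := le_of_lt ht.1
    have huIcc : uIcc aa t = Icc aa t := uIcc_of_le hle
    have hFdi : IntervalIntegrable (Fd h) volume aa t := by
      apply ContinuousOn.intervalIntegrable
      rw [huIcc]; exact contOn_Fd hh hne
    have heq : ∫ x in aa..t, Fd h x = FF h t - FF h aa := by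
      apply intervalIntegral.integral_eq_sub_of_hasDerivAt
      · intro x hx
        rw [huIcc] at hx
        exact hasDerivAt_FF hh (hne x hx)
      · exact hFdi
    have hFFaa : FF h aa = 0 := by simp [FF, g5p_aa]
    have hmono : ∫ x in aa..t, Fd h x ≤ ∫ x in aa..t, Dfun h x := by
      apply intervalIntegral.integral_mono_on hle hFdi (hDi aa t)
      intro x _; exact Fd_le_Dfun x
    have hadd : (∫ x in aa..t, Dfun h x) + ∫ x in t..cc, Dfun h x = ∫ x in aa..cc, Dfun h x :=
      intervalIntegral.integral_add_adjacent_intervals (hDi aa t) (hDi t cc)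
    rw [heq, hFFaa, sub_zero] at hmono
    linarith [hmono, hadd]
  -- limit of FF h along 𝓝[<] cc
  have hsubfilter : 𝓝[<] cc ≤ 𝓝[≠] cc :=
    nhdsWithin_mono cc (fun x hx => ne_of_lt hx)
  have hslope : Tendsto (slope h cc) (𝓝[<] cc) (𝓝 (deriv h cc)) :=
    (hasDerivAt_iff_tendsto_slope.1 hD_cc).mono_left hsubfilter
  have hmem : Ioo aa cc ∈ 𝓝[<] cc := Ioo_mem_nhdsLT_of_mem ⟨aa_lt_cc, le_rfl⟩
  have hBBcc : BB cc ≠ 0 := ne_of_gt (BB_pos cc_pos (le_of_lt cc_lt_bb))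
  have hFFeq : ∀ t ∈ Ioo aa cc,
      FF h t = rr t * g5p t * (-(slope h cc t * h t)) / BB t := by
    intro t ht
    have htc : t - cc ≠ 0 := by have := ht.2; intro hc; linarith [sub_eq_zero.1 hc]
    have hBt : BB t ≠ 0 := ne_of_gt (BB_pos (lt_trans aa_pos ht.1) (by linarith [ht.2, cc_lt_bb]))
    have hgne : g5 t ≠ 0 := ne_of_gt (g5_pos_left (le_of_lt ht.1) ht.2)
    simp only [FF, slope_def_field, h0, sub_zero]
    rw [g5_eq t] at hgne ⊢
    field_simp
    have htc2 : -t + cc ≠ 0 := by intro hc; apply htc; linarith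
    have hinv : (-t + cc) * (-t + cc)⁻¹ = 1 := mul_inv_cancel₀ htc2
    linear_combination (-(rr t * g5p t * h t ^ 2)) * hinv
  have hT1 : Tendsto (FF h) (𝓝[<] cc) (𝓝 0) := by
    have t1 : Tendsto (fun t => rr t * g5p t) (𝓝[<] cc) (𝓝 (rr cc * g5p cc)) :=
      ((cont_rr.mul cont_g5p).tendsto cc).mono_left nhdsWithin_le_nhds
    have t3 : Tendsto h (𝓝[<] cc) (𝓝 0) := by
      have := (hh.continuous.tendsto cc).mono_left (nhdsWithin_le_nhds (s := Iio cc))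
      rwa [h0] at this
    have t4 : Tendsto BB (𝓝[<] cc) (𝓝 (BB cc)) :=
      (cont_BB.tendsto cc).mono_left nhdsWithin_le_nhds
    have tnum : Tendsto (fun t => rr t * g5p t * (-(slope h cc t * h t)))
        (𝓝[<] cc) (𝓝 (rr cc * g5p cc * (-(deriv h cc * 0)))) :=
      t1.mul ((hslope.mul t3).neg)
    have tall := tnum.div t4 hBBcc
    have hval : rr cc * g5p cc * (-(deriv h cc * 0)) / BB cc = 0 := by ring
    rw [hval] at tall
    exact tall.congr' (by filter_upwards [hmem] with t ht using (hFFeq t ht).symm)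
  -- limit of tail integral
  have hT2 : Tendsto (fun t => ∫ x in t..cc, Dfun h x) (𝓝[<] cc) (𝓝 0) := by
    obtain ⟨C, hC⟩ := (isCompact_Icc (a := aa) (b := cc)).exists_bound_of_continuousOn
      (cont_Dfun hh).continuousOn
    have hbound : ∀ᶠ t in 𝓝[<] cc, ‖∫ x in t..cc, Dfun h x‖ ≤ C * |cc - t| := by
      filter_upwards [hmem] with t ht
      apply intervalIntegral.norm_integral_le_of_norm_le_const
      intro x hx
      rw [uIoc_of_le (le_of_lt ht.2)] at hx
      exact hC x ⟨le_of_lt (lt_trans ht.1 hx.1), hx.2⟩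
    have hzero : Tendsto (fun t : ℝ => C * |cc - t|) (𝓝[<] cc) (𝓝 0) := by
      have : Tendsto (fun t : ℝ => C * |cc - t|) (𝓝 cc) (𝓝 (C * |cc - cc|)) :=
        (continuous_const.mul ((continuous_const.sub continuous_id).abs)).tendsto cc
      simpa using this.mono_left nhdsWithin_le_nhds
    exact squeeze_zero_norm' hbound hzero
  -- conclude
  have hlim : Tendsto (fun t => FF h t + ∫ x in t..cc, Dfun h x) (𝓝[<] cc) (𝓝 0) := by
    simpa using hT1.add hT2
  exact le_of_tendsto hlim (by filter_upwards [hmem] with t ht using main t ht)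



lemma half_right {h : ℝ → ℝ} (hh : ContDiff ℝ 1 h) (h0 : h cc = 0) :
    0 ≤ ∫ x in cc..bb, Dfun h x := by
  have hD_cc : HasDerivAt h (deriv h cc) cc := (hh.differentiable one_ne_zero cc).hasDerivAt
  have hDi : ∀ p q : ℝ, IntervalIntegrable (Dfun h) volume p q :=
    fun p q => (cont_Dfun hh).intervalIntegrable p q
  have main : ∀ t ∈ Ioo cc bb, (∫ x in cc..t, Dfun h x) - FF h t ≤ ∫ x in cc..bb, Dfun h x := by
    intro t ht
    have hsub : Icc t bb ⊆ Ioc cc bb := fun x hx => ⟨lt_of_lt_of_le ht.1 hx.1, hx.2⟩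
    have hne : ∀ x ∈ Icc t bb, g5 x ≠ 0 := fun x hx =>
      ne_of_lt (g5_neg_right (hsub hx).1 (hsub hx).2)
    have hle : t ≤ bb := le_of_lt ht.2
    have huIcc : uIcc t bb = Icc t bb := uIcc_of_le hle
    have hFdi : IntervalIntegrable (Fd h) volume t bb := by
      apply ContinuousOn.intervalIntegrable
      rw [huIcc]; exact contOn_Fd hh hne
    have heq : ∫ x in t..bb, Fd h x = FF h bb - FF h t := by
      apply intervalIntegral.integral_eq_sub_of_hasDerivAt
      · intro x hx
        rw [huIcc] at hx
        exact hasDerivAt_FF hh (hne x hx)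
      · exact hFdi
    have hFFbb : FF h bb = 0 := by simp [FF, g5p_bb]
    have hmono : ∫ x in t..bb, Fd h x ≤ ∫ x in t..bb, Dfun h x := by
      apply intervalIntegral.integral_mono_on hle hFdi (hDi t bb)
      intro x _; exact Fd_le_Dfun x
    have hadd : (∫ x in cc..t, Dfun h x) + ∫ x in t..bb, Dfun h x = ∫ x in cc..bb, Dfun h x :=
      intervalIntegral.integral_add_adjacent_intervals (hDi cc t) (hDi t bb)
    rw [heq, hFFbb, zero_sub] at hmono
    linarith [hmono, hadd]
  have hsubfilter : 𝓝[>] cc ≤ 𝓝[≠] cc :=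
    nhdsWithin_mono cc (fun x hx => ne_of_gt hx)
  have hslope : Tendsto (slope h cc) (𝓝[>] cc) (𝓝 (deriv h cc)) :=
    (hasDerivAt_iff_tendsto_slope.1 hD_cc).mono_left hsubfilter
  have hmem : Ioo cc bb ∈ 𝓝[>] cc := Ioo_mem_nhdsGT_of_mem ⟨le_rfl, cc_lt_bb⟩
  have hBBcc : BB cc ≠ 0 := ne_of_gt (BB_pos cc_pos (le_of_lt cc_lt_bb))
  have hFFeq : ∀ t ∈ Ioo cc bb,
      FF h t = rr t * g5p t * (-(slope h cc t * h t)) / BB t := by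
    intro t ht
    have htc : t - cc ≠ 0 := by have := ht.1; intro hc; linarith [sub_eq_zero.1 hc]
    have hBt : BB t ≠ 0 := ne_of_gt (BB_pos (lt_trans cc_pos ht.1) (le_of_lt ht.2))
    have hgne : g5 t ≠ 0 := ne_of_lt (g5_neg_right ht.1 (le_of_lt ht.2))
    simp only [FF, slope_def_field, h0, sub_zero]
    rw [g5_eq t] at hgne ⊢
    field_simp
    have htc2 : -t + cc ≠ 0 := by intro hc; apply htc; linarith
    have hinv : (-t + cc) * (-t + cc)⁻¹ = 1 := mul_inv_cancel₀ htc2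
    linear_combination (-(rr t * g5p t * h t ^ 2)) * hinv
  have hT1 : Tendsto (FF h) (𝓝[>] cc) (𝓝 0) := by
    have t1 : Tendsto (fun t => rr t * g5p t) (𝓝[>] cc) (𝓝 (rr cc * g5p cc)) :=
      ((cont_rr.mul cont_g5p).tendsto cc).mono_left nhdsWithin_le_nhds
    have t3 : Tendsto h (𝓝[>] cc) (𝓝 0) := by
      have := (hh.continuous.tendsto cc).mono_left (nhdsWithin_le_nhds (s := Ioi cc))
      rwa [h0] at this
    have t4 : Tendsto BB (𝓝[>] cc) (𝓝 (BB cc)) :=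
      (cont_BB.tendsto cc).mono_left nhdsWithin_le_nhds
    have tnum : Tendsto (fun t => rr t * g5p t * (-(slope h cc t * h t)))
        (𝓝[>] cc) (𝓝 (rr cc * g5p cc * (-(deriv h cc * 0)))) :=
      t1.mul ((hslope.mul t3).neg)
    have tall := tnum.div t4 hBBcc
    have hval : rr cc * g5p cc * (-(deriv h cc * 0)) / BB cc = 0 := by ring
    rw [hval] at tall
    exact tall.congr' (by filter_upwards [hmem] with t ht using (hFFeq t ht).symm)
  have hT2 : Tendsto (fun t => ∫ x in cc..t, Dfun h x) (𝓝[>] cc) (𝓝 0) := by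
    obtain ⟨C, hC⟩ := (isCompact_Icc (a := cc) (b := bb)).exists_bound_of_continuousOn
      (cont_Dfun hh).continuousOn
    have hbound : ∀ᶠ t in 𝓝[>] cc, ‖∫ x in cc..t, Dfun h x‖ ≤ C * |t - cc| := by
      filter_upwards [hmem] with t ht
      apply intervalIntegral.norm_integral_le_of_norm_le_const
      intro x hx
      rw [uIoc_of_le (le_of_lt ht.1)] at hx
      exact hC x ⟨le_of_lt hx.1, le_trans hx.2 (le_of_lt ht.2)⟩
    have hzero : Tendsto (fun t : ℝ => C * |t - cc|) (𝓝[>] cc) (𝓝 0) := by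
      have : Tendsto (fun t : ℝ => C * |t - cc|) (𝓝 cc) (𝓝 (C * |cc - cc|)) :=
        (continuous_const.mul ((continuous_id.sub continuous_const).abs)).tendsto cc
      simpa using this.mono_left nhdsWithin_le_nhds
    exact squeeze_zero_norm' hbound hzero
  have hlim : Tendsto (fun t => (∫ x in cc..t, Dfun h x) - FF h t) (𝓝[>] cc) (𝓝 0) := by
    simpa using hT2.sub hT1
  exact le_of_tendsto hlim (by filter_upwards [hmem] with t ht using main t ht)

lemma integ1D {f : ℝ → ℝ} (hf : Continuous f) : IntegrableOn f (Ioo aa bb) volume :=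
  (hf.continuousOn.integrableOn_compact isCompact_Icc).mono_set Ioo_subset_Icc_self

/-- The sharp 1D Gaussian Neumann–Poincaré inequality on `(aa, bb)`. -/
lemma poincare1D {w : ℝ → ℝ} (hw : ContDiff ℝ 1 w)
    (hm : ∫ x in Ioo aa bb, w x * rr x = 0) :
    5 * ∫ x in Ioo aa bb, (w x)^2 * rr x ≤ ∫ x in Ioo aa bb, (deriv w x)^2 * rr x := by
  set k := w cc with hk
  set h : ℝ → ℝ := fun x => w x - k with hhdef
  have hh : ContDiff ℝ 1 h := hw.sub contDiff_const
  have h0 : h cc = 0 := sub_self k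
  have hderiv : deriv h = deriv w := by
    funext x; exact deriv_sub_const k
  have hhalf : 0 ≤ ∫ x in aa..bb, Dfun h x := by
    have hDi : ∀ p q : ℝ, IntervalIntegrable (Dfun h) volume p q :=
      fun p q => (cont_Dfun hh).intervalIntegrable p q
    have hadd : (∫ x in aa..cc, Dfun h x) + ∫ x in cc..bb, Dfun h x = ∫ x in aa..bb, Dfun h x :=
      intervalIntegral.integral_add_adjacent_intervals (hDi aa cc) (hDi cc bb)
    linarith [half_left hh h0, half_right hh h0, hadd]
  have hIoo : ∫ x in aa..bb, Dfun h x = ∫ x in Ioo aa bb, Dfun h x := by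
    rw [intervalIntegral.integral_of_le (le_of_lt aa_lt_bb), integral_Ioc_eq_integral_Ioo]
  rw [hIoo] at hhalf
  have hfun : (fun x => Dfun h x) = fun x =>
      (deriv w x)^2 * rr x - 5*((w x)^2 * rr x) + (10*k)*(w x * rr x) - (5*k^2)*rr x := by
    funext x
    simp only [Dfun]; rw [hderiv]; simp only [hhdef]
    ring
  have iA : IntegrableOn (fun x => (deriv w x)^2 * rr x) (Ioo aa bb) volume :=
    integ1D (((hw.continuous_deriv le_rfl).pow 2).mul cont_rr)
  have iB : IntegrableOn (fun x => 5*((w x)^2 * rr x)) (Ioo aa bb) volume :=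
    integ1D (continuous_const.mul ((hw.continuous.pow 2).mul cont_rr))
  have iC : IntegrableOn (fun x => (10*k)*(w x * rr x)) (Ioo aa bb) volume :=
    integ1D (continuous_const.mul (hw.continuous.mul cont_rr))
  have iD : IntegrableOn (fun x => (5*k^2)*rr x) (Ioo aa bb) volume :=
    integ1D (continuous_const.mul cont_rr)
  have iAB : IntegrableOn (fun x => deriv w x ^ 2 * rr x - 5 * ((w x)^2 * rr x))
      (Ioo aa bb) volume := by exact iA.sub iB
  have iABC : IntegrableOn
      (fun x => deriv w x ^ 2 * rr x - 5 * ((w x)^2 * rr x) + (10*k) * (w x * rr x))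
      (Ioo aa bb) volume := by exact iAB.add iC
  rw [hfun] at hhalf
  rw [integral_sub iABC iD] at hhalf
  rw [integral_add iAB iC] at hhalf
  rw [integral_sub iA iB] at hhalf
  rw [MeasureTheory.integral_const_mul, MeasureTheory.integral_const_mul, MeasureTheory.integral_const_mul, hm] at hhalf
  have hrr0 : 0 ≤ ∫ x in Ioo aa bb, rr x :=
    setIntegral_nonneg measurableSet_Ioo (fun x _ => le_of_lt (rr_pos x))
  nlinarith [hhalf, hrr0, sq_nonneg k]


def II : Set ℝ := Ioo aa bb
lemma poincare1D' {w : ℝ → ℝ} (hw : ContDiff ℝ 1 w)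
    (hm : (∫ x in II, w x * rr x) = 0) :
    5 * ∫ x in II, (w x)^2 * rr x ≤ ∫ x in II, (deriv w x)^2 * rr x :=
  poincare1D hw hm

attribute [fun_prop] cont_rr
def WW (p : ℝ × ℝ) : ℝ := rr p.1 * rr p.2

lemma cont_WW : Continuous WW := (cont_rr.comp continuous_fst).mul (cont_rr.comp continuous_snd)

lemma integII {f : ℝ → ℝ} (hf : Continuous f) : IntegrableOn f II volume :=
  (hf.continuousOn.integrableOn_compact isCompact_Icc).mono_set Ioo_subset_Icc_self

lemma ioo_eq (f : ℝ → ℝ) : ∫ x in II, f x = ∫ x in aa..bb, f x := by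
  rw [intervalIntegral.integral_of_le (le_of_lt aa_lt_bb), integral_Ioc_eq_integral_Ioo]; rfl

lemma restr_eq :
    (volume : Measure (ℝ × ℝ)).restrict (II ×ˢ II) =
      (volume.restrict II).prod (volume.restrict II) := by
  exact (Measure.prod_restrict II II).symm

lemma integSet {f : ℝ × ℝ → ℝ} (hf : Continuous f) : IntegrableOn f (II ×ˢ II) volume :=
  (hf.continuousOn.integrableOn_compact (isCompact_Icc.prod isCompact_Icc)).mono_set
    (prod_mono Ioo_subset_Icc_self Ioo_subset_Icc_self)

lemma integ2 {f : ℝ × ℝ → ℝ} (hf : Continuous f) :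
    Integrable f ((volume.restrict II).prod (volume.restrict II)) := by
  rw [← restr_eq]; exact integSet hf

lemma contParamX {F : ℝ × ℝ → ℝ} (hF : Continuous F) :
    Continuous (fun x => ∫ y in II, F (x, y)) := by
  have he : (fun x => ∫ y in II, F (x, y)) = fun x => ∫ y in aa..bb, F (x, y) :=
    funext fun x => ioo_eq _
  rw [he]
  exact intervalIntegral.continuous_parametric_intervalIntegral_of_continuous'
    (f := fun x y => F (x, y)) (by exact hF) aa bb

lemma contParamY {F : ℝ × ℝ → ℝ} (hF : Continuous F) :
    Continuous (fun y => ∫ x in II, F (x, y)) := by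
  have he : (fun y => ∫ x in II, F (x, y)) = fun y => ∫ x in aa..bb, F (x, y) :=
    funext fun y => ioo_eq _
  rw [he]
  exact intervalIntegral.continuous_parametric_intervalIntegral_of_continuous'
    (f := fun y x => F (x, y)) (by fun_prop) aa bb

lemma fubX {f : ℝ × ℝ → ℝ} (hf : Continuous f) :
    ∫ p in II ×ˢ II, f p * WW p = ∫ x in II, (∫ y in II, f (x, y) * rr y) * rr x := by
  rw [restr_eq, integral_prod (fun p => f p * WW p) (integ2 (hf.mul cont_WW))]
  apply MeasureTheory.integral_congr_ae (ae_of_all _ _)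
  intro x
  have he : (fun y => f (x, y) * WW (x, y)) = fun y => rr x * (f (x, y) * rr y) :=
    funext fun y => by simp only [WW]; ring
  rw [he, MeasureTheory.integral_const_mul, mul_comm]

lemma fubY {f : ℝ × ℝ → ℝ} (hf : Continuous f) :
    ∫ p in II ×ˢ II, f p * WW p = ∫ y in II, (∫ x in II, f (x, y) * rr x) * rr y := by
  rw [restr_eq, integral_prod_symm (fun p => f p * WW p) (integ2 (hf.mul cont_WW))]
  apply MeasureTheory.integral_congr_ae (ae_of_all _ _)
  intro y
  have he : (fun x => f (x, y) * WW (x, y)) = fun x => rr y * (f (x, y) * rr x) :=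
    funext fun x => by simp only [WW]; ring
  rw [he, MeasureTheory.integral_const_mul, mul_comm]

lemma sep (F G : ℝ → ℝ) :
    ∫ p in II ×ˢ II, F p.1 * G p.2 = (∫ x in II, F x) * (∫ y in II, G y) := by
  rw [restr_eq, integral_prod_mul]

/-- The 2D sharp Poincaré inequality on the square. -/
lemma lower2D {v : ℝ × ℝ → ℝ} (hv : ContDiff ℝ 1 v)
    (hmean : ∫ p in II ×ˢ II, v p * WW p = 0) :
    5 * ∫ p in II ×ˢ II, (v p)^2 * WW p ≤
      ∫ p in II ×ˢ II, ((deriv (fun x => v (x, p.2)) p.1)^2 +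
        (deriv (fun y => v (p.1, y)) p.2)^2) * WW p := by
  have hvc : Continuous v := hv.continuous
  -- partial derivatives
  set d1 : ℝ × ℝ → ℝ := fun p => fderiv ℝ v p (1, 0) with hd1def
  set d2 : ℝ × ℝ → ℝ := fun p => fderiv ℝ v p (0, 1) with hd2def
  have hfd : ∀ p : ℝ × ℝ, HasFDerivAt v (fderiv ℝ v p) p :=
    fun p => (hv.differentiable one_ne_zero p).hasFDerivAt
  have hp1 : ∀ a b : ℝ, HasDerivAt (fun x => v (x, b)) (d1 (a, b)) a := by
    intro a b
    have hcurve : HasDerivAt (fun x : ℝ => (x, b)) ((1 : ℝ), (0 : ℝ)) a :=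
      HasDerivAt.prodMk (hasDerivAt_id a) (hasDerivAt_const a b)
    exact (hfd (a, b)).comp_hasDerivAt a hcurve
  have hp2 : ∀ a b : ℝ, HasDerivAt (fun y => v (a, y)) (d2 (a, b)) b := by
    intro a b
    have hcurve : HasDerivAt (fun y : ℝ => (a, y)) ((0 : ℝ), (1 : ℝ)) b :=
      HasDerivAt.prodMk (hasDerivAt_const b a) (hasDerivAt_id b)
    exact (hfd (a, b)).comp_hasDerivAt b hcurve
  have hcd1 : Continuous d1 := (hv.continuous_fderiv one_ne_zero).clm_apply continuous_const
  have hcd2 : Continuous d2 := (hv.continuous_fderiv one_ne_zero).clm_apply continuous_const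
  -- slices are C¹
  have hsliceX : ∀ b : ℝ, ContDiff ℝ 1 (fun x => v (x, b)) :=
    fun b => hv.comp (contDiff_id.prodMk contDiff_const)
  have hsliceY : ∀ a : ℝ, ContDiff ℝ 1 (fun y => v (a, y)) :=
    fun a => hv.comp (contDiff_const.prodMk contDiff_id)
  -- means
  set mX : ℝ → ℝ := fun y => ∫ x in II, v (x, y) * rr x with hmXdef
  set mY : ℝ → ℝ := fun x => ∫ y in II, v (x, y) * rr y with hmYdef
  have hmXc : Continuous mX := contParamY ((hvc).mul (cont_rr.comp continuous_fst))
  have hmYc : Continuous mY := contParamX ((hvc).mul (cont_rr.comp continuous_snd))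
  set CI : ℝ := ∫ x in II, rr x with hCIdef
  have hCIpos : 0 < CI := by
    rw [hCIdef, ioo_eq]
    exact intervalIntegral.intervalIntegral_pos_of_pos_on
      (cont_rr.intervalIntegrable aa bb) (fun x _ => rr_pos x) aa_lt_bb
  -- the means of the means vanish
  have hmY0 : ∫ x in II, mY x * rr x = 0 := by rw [← fubX hvc]; exact hmean
  have hmX0 : ∫ y in II, mX y * rr y = 0 := by rw [← fubY hvc]; exact hmean
  -- named 1D integrals
  set K : ℝ := ∫ y in II, (mX y)^2 * rr y with hKdef
  set L : ℝ := ∫ x in II, (mY x)^2 * rr x with hLdef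
  set T1 : ℝ := ∫ p in II ×ˢ II, (v p)^2 * WW p with hT1def
  set Nx : ℝ := ∫ p in II ×ˢ II, (d1 p)^2 * WW p with hNxdef
  set Ny : ℝ := ∫ p in II ×ˢ II, (d2 p)^2 * WW p with hNydef
  have hT1X : T1 = ∫ x in II, (∫ y in II, (v (x, y))^2 * rr y) * rr x := fubX (hvc.pow 2)
  have hT1Y : T1 = ∫ y in II, (∫ x in II, (v (x, y))^2 * rr x) * rr y := fubY (hvc.pow 2)
  -- STEP: y-direction slice inequality
  have hStepY : 5 * (T1 - L / CI) ≤ Ny := by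
    have hB : ∀ a : ℝ,
        5 * ((∫ y in II, (v (a, y))^2 * rr y) - (mY a)^2 / CI)
          ≤ ∫ y in II, (d2 (a, y))^2 * rr y := by
      intro a
      set c : ℝ := mY a / CI with hcdef
      have hw : ContDiff ℝ 1 (fun y => v (a, y) - c) := (hsliceY a).sub contDiff_const
      have hiv : IntegrableOn (fun y => v (a, y) * rr y) II volume :=
        integII ((hvc.comp (continuous_const.prodMk continuous_id)).mul cont_rr)
      have hirr : IntegrableOn (fun y => c * rr y) II volume :=
        integII (continuous_const.mul cont_rr)
      have hmw : ∫ y in II, (v (a, y) - c) * rr y = 0 := by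
        have he : (fun y => (v (a, y) - c) * rr y) =
            fun y => v (a, y) * rr y - c * rr y := funext fun y => by ring
        rw [he, integral_sub hiv hirr, MeasureTheory.integral_const_mul]
        simp only [hcdef]
        field_simp
        show mY a * CI - mY a * CI = CI * 0
        ring
      have := poincare1D' hw hmw
      have hder : ∀ y : ℝ, deriv (fun y => v (a, y) - c) y = d2 (a, y) := by
        intro y
        rw [deriv_sub_const]
        exact (hp2 a y).deriv
      have hder2 : (fun y => (deriv (fun y => v (a, y) - c) y)^2 * rr y) =
          fun y => (d2 (a, y))^2 * rr y := funext fun y => by rw [hder]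
      rw [hder2] at this
      -- expand the square
      have hexp : ∫ y in II, (v (a, y) - c)^2 * rr y
          = (∫ y in II, (v (a, y))^2 * rr y) - (mY a)^2 / CI := by
        have hi1 : IntegrableOn (fun y => (v (a, y))^2 * rr y) II volume :=
          integII (((hvc.comp (continuous_const.prodMk continuous_id)).pow 2).mul cont_rr)
        have hi2 : IntegrableOn (fun y => (2*c) * (v (a, y) * rr y)) II volume := by
          exact hiv.const_mul _
        have hi12 : IntegrableOn
            (fun y => (v (a, y))^2 * rr y - (2*c) * (v (a, y) * rr y)) II volume := by
          exact hi1.sub hi2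
        have hi3 : IntegrableOn (fun y => (c^2) * rr y) II volume :=
          integII (continuous_const.mul cont_rr)
        have he : (fun y => (v (a, y) - c)^2 * rr y) =
            fun y => ((v (a, y))^2 * rr y - (2*c) * (v (a, y) * rr y)) + (c^2) * rr y :=
          funext fun y => by ring
        rw [he, integral_add hi12 hi3, integral_sub hi1 hi2, MeasureTheory.integral_const_mul,
          MeasureTheory.integral_const_mul]
        have : mY a = ∫ y in II, v (a, y) * rr y := rfl
        rw [← this, ← hCIdef, hcdef]
        field_simp
        ring
      rw [hexp] at this
      exact this
    -- integrate over a ∈ II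
    have hri : ∀ a : ℝ, (0:ℝ) ≤ rr a := fun a => (rr_pos a).le
    have hfL : Continuous (fun a => (5 * ((∫ y in II, (v (a, y))^2 * rr y) - (mY a)^2 / CI)) * rr a) := by
      have h1 : Continuous (fun a => ∫ y in II, (v (a, y))^2 * rr y) :=
        contParamX ((hvc.pow 2).mul (cont_rr.comp continuous_snd))
      fun_prop
    have hfR : Continuous (fun a => (∫ y in II, (d2 (a, y))^2 * rr y) * rr a) := by
      have h1 : Continuous (fun a => ∫ y in II, (d2 (a, y))^2 * rr y) :=
        contParamX ((hcd2.pow 2).mul (cont_rr.comp continuous_snd))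
      fun_prop
    have hmono : ∫ a in II, (5 * ((∫ y in II, (v (a, y))^2 * rr y) - (mY a)^2 / CI)) * rr a
        ≤ ∫ a in II, (∫ y in II, (d2 (a, y))^2 * rr y) * rr a := by
      apply setIntegral_mono_on (integII hfL) (integII hfR) measurableSet_Ioo
      intro a _
      exact mul_le_mul_of_nonneg_right (hB a) (hri a)
    have hR : ∫ a in II, (∫ y in II, (d2 (a, y))^2 * rr y) * rr a = Ny := (fubX (hcd2.pow 2)).symm
    have hLsplit : ∫ a in II, (5 * ((∫ y in II, (v (a, y))^2 * rr y) - (mY a)^2 / CI)) * rr a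
        = 5 * (T1 - L / CI) := by
      have hi1 : IntegrableOn (fun a => (∫ y in II, (v (a, y))^2 * rr y) * rr a) II volume :=
        integII ((contParamX ((hvc.pow 2).mul (cont_rr.comp continuous_snd))).mul cont_rr)
      have hi2 : IntegrableOn (fun a => (1/CI) * ((mY a)^2 * rr a)) II volume :=
        (integII ((hmYc.pow 2).mul cont_rr)).const_mul _
      have he : (fun a => (5 * ((∫ y in II, (v (a, y))^2 * rr y) - (mY a)^2 / CI)) * rr a)
          = fun a => (5:ℝ) * ((∫ y in II, (v (a, y))^2 * rr y) * rr a
              - (1/CI) * ((mY a)^2 * rr a)) := funext fun a => by field_simp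
      rw [he, MeasureTheory.integral_const_mul, integral_sub hi1 hi2, MeasureTheory.integral_const_mul, ← hT1X, ← hLdef]
      ring
    rw [hLsplit, hR] at hmono
    exact hmono
  -- STEP: x-direction slice inequality
  have hStepX : 5 * (T1 - K / CI) ≤ Nx := by
    have hB : ∀ b : ℝ,
        5 * ((∫ x in II, (v (x, b))^2 * rr x) - (mX b)^2 / CI)
          ≤ ∫ x in II, (d1 (x, b))^2 * rr x := by
      intro b
      set c : ℝ := mX b / CI with hcdef
      have hw : ContDiff ℝ 1 (fun x => v (x, b) - c) := (hsliceX b).sub contDiff_const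
      have hiv : IntegrableOn (fun x => v (x, b) * rr x) II volume :=
        integII ((hvc.comp (continuous_id.prodMk continuous_const)).mul cont_rr)
      have hirr : IntegrableOn (fun x => c * rr x) II volume :=
        integII (continuous_const.mul cont_rr)
      have hmw : ∫ x in II, (v (x, b) - c) * rr x = 0 := by
        have he : (fun x => (v (x, b) - c) * rr x) =
            fun x => v (x, b) * rr x - c * rr x := funext fun x => by ring
        rw [he, integral_sub hiv hirr, MeasureTheory.integral_const_mul]
        simp only [hcdef]
        field_simp
        show mX b * CI - mX b * CI = CI * 0
        ring
      have := poincare1D' hw hmw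
      have hder : ∀ x : ℝ, deriv (fun x => v (x, b) - c) x = d1 (x, b) := by
        intro x
        rw [deriv_sub_const]
        exact (hp1 x b).deriv
      have hder2 : (fun x => (deriv (fun x => v (x, b) - c) x)^2 * rr x) =
          fun x => (d1 (x, b))^2 * rr x := funext fun x => by rw [hder]
      rw [hder2] at this
      have hexp : ∫ x in II, (v (x, b) - c)^2 * rr x
          = (∫ x in II, (v (x, b))^2 * rr x) - (mX b)^2 / CI := by
        have hi1 : IntegrableOn (fun x => (v (x, b))^2 * rr x) II volume :=
          integII (((hvc.comp (continuous_id.prodMk continuous_const)).pow 2).mul cont_rr)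
        have hi2 : IntegrableOn (fun x => (2*c) * (v (x, b) * rr x)) II volume := by
          exact hiv.const_mul _
        have hi12 : IntegrableOn
            (fun x => (v (x, b))^2 * rr x - (2*c) * (v (x, b) * rr x)) II volume := by
          exact hi1.sub hi2
        have hi3 : IntegrableOn (fun x => (c^2) * rr x) II volume :=
          integII (continuous_const.mul cont_rr)
        have he : (fun x => (v (x, b) - c)^2 * rr x) =
            fun x => ((v (x, b))^2 * rr x - (2*c) * (v (x, b) * rr x)) + (c^2) * rr x :=
          funext fun x => by ring
        rw [he, integral_add hi12 hi3, integral_sub hi1 hi2, MeasureTheory.integral_const_mul,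
          MeasureTheory.integral_const_mul]
        have : mX b = ∫ x in II, v (x, b) * rr x := rfl
        rw [← this, ← hCIdef, hcdef]
        field_simp
        ring
      rw [hexp] at this
      exact this
    have hri : ∀ a : ℝ, (0:ℝ) ≤ rr a := fun a => (rr_pos a).le
    have hfL : Continuous (fun b => (5 * ((∫ x in II, (v (x, b))^2 * rr x) - (mX b)^2 / CI)) * rr b) := by
      have h1 : Continuous (fun b => ∫ x in II, (v (x, b))^2 * rr x) :=
        contParamY ((hvc.pow 2).mul (cont_rr.comp continuous_fst))
      fun_prop
    have hfR : Continuous (fun b => (∫ x in II, (d1 (x, b))^2 * rr x) * rr b) := by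
      have h1 : Continuous (fun b => ∫ x in II, (d1 (x, b))^2 * rr x) :=
        contParamY ((hcd1.pow 2).mul (cont_rr.comp continuous_fst))
      fun_prop
    have hmono : ∫ b in II, (5 * ((∫ x in II, (v (x, b))^2 * rr x) - (mX b)^2 / CI)) * rr b
        ≤ ∫ b in II, (∫ x in II, (d1 (x, b))^2 * rr x) * rr b := by
      apply setIntegral_mono_on (integII hfL) (integII hfR) measurableSet_Ioo
      intro b _
      exact mul_le_mul_of_nonneg_right (hB b) (hri b)
    have hR : ∫ b in II, (∫ x in II, (d1 (x, b))^2 * rr x) * rr b = Nx := (fubY (hcd1.pow 2)).symm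
    have hLsplit : ∫ b in II, (5 * ((∫ x in II, (v (x, b))^2 * rr x) - (mX b)^2 / CI)) * rr b
        = 5 * (T1 - K / CI) := by
      have hi1 : IntegrableOn (fun b => (∫ x in II, (v (x, b))^2 * rr x) * rr b) II volume :=
        integII ((contParamY ((hvc.pow 2).mul (cont_rr.comp continuous_fst))).mul cont_rr)
      have hi2 : IntegrableOn (fun b => (1/CI) * ((mX b)^2 * rr b)) II volume :=
        (integII ((hmXc.pow 2).mul cont_rr)).const_mul _
      have he : (fun b => (5 * ((∫ x in II, (v (x, b))^2 * rr x) - (mX b)^2 / CI)) * rr b)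
          = fun b => (5:ℝ) * ((∫ x in II, (v (x, b))^2 * rr x) * rr b
              - (1/CI) * ((mX b)^2 * rr b)) := funext fun b => by field_simp
      rw [he, MeasureTheory.integral_const_mul, integral_sub hi1 hi2, MeasureTheory.integral_const_mul, ← hT1Y, ← hKdef]
      ring
    rw [hLsplit, hR] at hmono
    exact hmono
  -- orthogonality step
  have hOrth : 0 ≤ T1 - K / CI - L / CI := by
    have hq : 0 ≤ ∫ p in II ×ˢ II, (v p - mX p.2 / CI - mY p.1 / CI)^2 * WW p :=
      setIntegral_nonneg (measurableSet_Ioo.prod measurableSet_Ioo)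
        (fun p _ => mul_nonneg (sq_nonneg _) (mul_nonneg (rr_pos _).le (rr_pos _).le))
    -- six pieces
    have hE2 : ∫ p in II ×ˢ II, (v p * mX p.2) * WW p = K := by
      rw [fubY (f := fun p => v p * mX p.2) (by exact hvc.mul (hmXc.comp continuous_snd))]
      rw [hKdef]
      apply MeasureTheory.integral_congr_ae (ae_of_all _ _)
      intro y
      have he : (fun x => (v (x, y) * mX y) * rr x) = fun x => mX y * (v (x, y) * rr x) :=
        funext fun x => by ring
      rw [he, MeasureTheory.integral_const_mul]
      have : mX y = ∫ x in II, v (x, y) * rr x := rfl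
      rw [← this]
      ring
    have hE3 : ∫ p in II ×ˢ II, (v p * mY p.1) * WW p = L := by
      rw [fubX (f := fun p => v p * mY p.1) (by exact hvc.mul (hmYc.comp continuous_fst))]
      rw [hLdef]
      apply MeasureTheory.integral_congr_ae (ae_of_all _ _)
      intro x
      have he : (fun y => (v (x, y) * mY x) * rr y) = fun y => mY x * (v (x, y) * rr y) :=
        funext fun y => by ring
      rw [he, MeasureTheory.integral_const_mul]
      have : mY x = ∫ y in II, v (x, y) * rr y := rfl
      rw [← this]
      ring
    have hE4 : ∫ p in II ×ˢ II, (mX p.2)^2 * WW p = CI * K := by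
      have he : (fun p : ℝ × ℝ => (mX p.2)^2 * WW p) =
          fun p : ℝ × ℝ => rr p.1 * ((mX p.2)^2 * rr p.2) := funext fun p => by
        simp only [WW]; ring
      rw [he, sep (fun x => rr x) (fun y => (mX y)^2 * rr y), ← hCIdef, ← hKdef]
    have hE5 : ∫ p in II ×ˢ II, (mY p.1)^2 * WW p = L * CI := by
      have he : (fun p : ℝ × ℝ => (mY p.1)^2 * WW p) =
          fun p : ℝ × ℝ => ((mY p.1)^2 * rr p.1) * rr p.2 := funext fun p => by
        simp only [WW]; ring
      rw [he, sep (fun x => (mY x)^2 * rr x) (fun y => rr y), ← hCIdef, ← hLdef]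
    have hE6 : ∫ p in II ×ˢ II, (mX p.2 * mY p.1) * WW p = 0 := by
      have he : (fun p : ℝ × ℝ => (mX p.2 * mY p.1) * WW p) =
          fun p : ℝ × ℝ => (mY p.1 * rr p.1) * (mX p.2 * rr p.2) := funext fun p => by
        simp only [WW]; ring
      rw [he, sep (fun x => mY x * rr x) (fun y => mX y * rr y), hmY0, hmX0, mul_zero]
    -- expand the square
    have hexpand : ∫ p in II ×ˢ II, (v p - mX p.2 / CI - mY p.1 / CI)^2 * WW p
        = T1 - K / CI - L / CI := by
      have i1 : IntegrableOn (fun p : ℝ × ℝ => (v p)^2 * WW p) (II ×ˢ II) volume :=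
        integSet ((hvc.pow 2).mul cont_WW)
      have i2 : IntegrableOn (fun p : ℝ × ℝ => (2/CI) * ((v p * mX p.2) * WW p)) (II ×ˢ II) volume :=
        (integSet ((hvc.mul (hmXc.comp continuous_snd)).mul cont_WW)).const_mul _
      have i3 : IntegrableOn (fun p : ℝ × ℝ => (2/CI) * ((v p * mY p.1) * WW p)) (II ×ˢ II) volume :=
        (integSet ((hvc.mul (hmYc.comp continuous_fst)).mul cont_WW)).const_mul _
      have i4 : IntegrableOn (fun p : ℝ × ℝ => (1/CI^2) * ((mX p.2)^2 * WW p)) (II ×ˢ II) volume :=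
        (integSet (((hmXc.comp continuous_snd).pow 2).mul cont_WW)).const_mul _
      have i5 : IntegrableOn (fun p : ℝ × ℝ => (1/CI^2) * ((mY p.1)^2 * WW p)) (II ×ˢ II) volume :=
        (integSet (((hmYc.comp continuous_fst).pow 2).mul cont_WW)).const_mul _
      have i6 : IntegrableOn (fun p : ℝ × ℝ => (2/CI^2) * ((mX p.2 * mY p.1) * WW p)) (II ×ˢ II) volume :=
        (integSet (((hmXc.comp continuous_snd).mul (hmYc.comp continuous_fst)).mul cont_WW)).const_mul _
      have i12 : IntegrableOn (fun p : ℝ × ℝ => (v p)^2 * WW p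
          - (2/CI) * ((v p * mX p.2) * WW p)) (II ×ˢ II) volume := by exact i1.sub i2
      have i123 : IntegrableOn (fun p : ℝ × ℝ => (v p)^2 * WW p
          - (2/CI) * ((v p * mX p.2) * WW p)
          - (2/CI) * ((v p * mY p.1) * WW p)) (II ×ˢ II) volume := by exact i12.sub i3
      have i1234 : IntegrableOn (fun p : ℝ × ℝ => (v p)^2 * WW p
          - (2/CI) * ((v p * mX p.2) * WW p)
          - (2/CI) * ((v p * mY p.1) * WW p)
          + (1/CI^2) * ((mX p.2)^2 * WW p)) (II ×ˢ II) volume := by exact i123.add i4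
      have i12345 : IntegrableOn (fun p : ℝ × ℝ => (v p)^2 * WW p
          - (2/CI) * ((v p * mX p.2) * WW p)
          - (2/CI) * ((v p * mY p.1) * WW p)
          + (1/CI^2) * ((mX p.2)^2 * WW p)
          + (1/CI^2) * ((mY p.1)^2 * WW p)) (II ×ˢ II) volume := by exact i1234.add i5
      have he : (fun p : ℝ × ℝ => (v p - mX p.2 / CI - mY p.1 / CI)^2 * WW p)
          = fun p : ℝ × ℝ => (v p)^2 * WW p
          - (2/CI) * ((v p * mX p.2) * WW p)
          - (2/CI) * ((v p * mY p.1) * WW p)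
          + (1/CI^2) * ((mX p.2)^2 * WW p)
          + (1/CI^2) * ((mY p.1)^2 * WW p)
          + (2/CI^2) * ((mX p.2 * mY p.1) * WW p) := by
        funext p
        have hCI : CI ≠ 0 := hCIpos.ne'
        field_simp
        ring
      rw [he, integral_add i12345 i6, integral_add i1234 i5, integral_add i123 i4,
        integral_sub i12 i3, integral_sub i1 i2,
        MeasureTheory.integral_const_mul, MeasureTheory.integral_const_mul, MeasureTheory.integral_const_mul, MeasureTheory.integral_const_mul,
        MeasureTheory.integral_const_mul, hE2, hE3, hE4, hE5, hE6]
      simp only [← hT1def]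
      field_simp
      ring
    rw [hexpand] at hq
    exact hq
  -- assemble
  have hsplit : ∫ p in II ×ˢ II, ((deriv (fun x => v (x, p.2)) p.1)^2 +
      (deriv (fun y => v (p.1, y)) p.2)^2) * WW p = Nx + Ny := by
    have he : (fun p : ℝ × ℝ => ((deriv (fun x => v (x, p.2)) p.1)^2 +
        (deriv (fun y => v (p.1, y)) p.2)^2) * WW p)
        = fun p : ℝ × ℝ => (d1 p)^2 * WW p + (d2 p)^2 * WW p := by
      funext p
      have h1 : deriv (fun x => v (x, p.2)) p.1 = d1 (p.1, p.2) := (hp1 p.1 p.2).deriv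
      have h2 : deriv (fun y => v (p.1, y)) p.2 = d2 (p.1, p.2) := (hp2 p.1 p.2).deriv
      rw [h1, h2]
      simp only [Prod.mk.eta]
      ring
    rw [he, integral_add (f := fun p => d1 p ^ 2 * WW p) (g := fun p => d2 p ^ 2 * WW p) (integSet ((hcd1.pow 2).mul cont_WW))
      (integSet ((hcd2.pow 2).mul cont_WW)), ← hNxdef, ← hNydef]
  rw [hsplit]
  have h5 : 0 < CI := hCIpos
  linarith [hStepX, hStepY, hOrth]



lemma CI_pos : 0 < ∫ x in II, rr x := by
  rw [ioo_eq]
  exact intervalIntegral.intervalIntegral_pos_of_pos_on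
    (cont_rr.intervalIntegrable aa bb) (fun x _ => rr_pos x) aa_lt_bb

lemma A2_pos : 0 < ∫ x in II, (g5 x)^2 * rr x := by
  have hsub : Ioo aa cc ⊆ II := Ioo_subset_Ioo le_rfl cc_lt_bb.le
  have hi : IntegrableOn (fun x => (g5 x)^2 * rr x) II volume :=
    integII ((cont_g5.pow 2).mul cont_rr)
  have h1 : 0 < ∫ x in Ioo aa cc, (g5 x)^2 * rr x := by
    rw [← integral_Ioc_eq_integral_Ioo, ← intervalIntegral.integral_of_le aa_lt_cc.le]
    exact intervalIntegral.intervalIntegral_pos_of_pos_on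
      (((cont_g5.pow 2).mul cont_rr).intervalIntegrable _ _)
      (fun x hx => mul_pos (pow_pos (g5_pos_left hx.1.le hx.2) 2) (rr_pos x)) aa_lt_cc
  have h2 : (∫ x in Ioo aa cc, (g5 x)^2 * rr x) ≤ ∫ x in II, (g5 x)^2 * rr x := by
    apply setIntegral_mono_set hi
      (Eventually.of_forall (fun x => mul_nonneg (sq_nonneg _) (rr_pos x).le))
      (HasSubset.Subset.eventuallyLE hsub)
  linarith

lemma int_g5_rr_II : ∫ x in II, g5 x * rr x = 0 := by
  rw [ioo_eq]; exact int_g5_rr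

lemma int_g5p_sq_II : ∫ x in II, (g5p x)^2 * rr x = 5 * ∫ x in II, (g5 x)^2 * rr x := by
  rw [ioo_eq (fun x => (g5p x)^2 * rr x), ioo_eq (fun x => (g5 x)^2 * rr x)]
  exact int_g5p_sq

lemma contDiff_g5 : ContDiff ℝ 1 g5 := by unfold g5; fun_prop

lemma deriv_g5_eq : deriv g5 = g5p := funext fun x => (hasDerivAt_g5 x).deriv

end NESq

/-- In `ℝ²`, the first nontrivial Gaussian Neumann eigenvalue of the square
`T = (√(3−√6), √(3+√6))²` equals `5` (stated variationally as the minimum of the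
Gaussian Rayleigh quotient over nonzero mean-zero functions); in particular
`u(x,y) = x⁵ − 10x³ + 15x` has Gaussian mean zero on `T`, satisfies
`−Δu + (x,y)·∇u = 5u` in `T` and `∂u/∂ν = 0` on `∂T`. -/
theorem neumann_eigenvalue_square_eq_five
    (α β : ℝ) (hα : α = Real.sqrt (3 - Real.sqrt 6)) (hβ : β = Real.sqrt (3 + Real.sqrt 6))
    (T : Set (ℝ × ℝ)) (hT : T = Ioo α β ×ˢ Ioo α β)
    (φ : ℝ × ℝ → ℝ) (hφ : ∀ p, φ p = (2 * Real.pi)⁻¹ * Real.exp (-(p.1 ^ 2 + p.2 ^ 2) / 2))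
    (u : ℝ × ℝ → ℝ) (hu : ∀ p, u p = p.1 ^ 5 - 10 * p.1 ^ 3 + 15 * p.1) :
    IsLeast { q : ℝ | ∃ v : ℝ × ℝ → ℝ, ContDiff ℝ 1 v ∧
        (∫ p in T, v p * φ p) = 0 ∧
        (∫ p in T, (v p) ^ 2 * φ p) ≠ 0 ∧
        q = (∫ p in T,
              ((deriv (fun x => v (x, p.2)) p.1) ^ 2 +
                (deriv (fun y => v (p.1, y)) p.2) ^ 2) * φ p) /
            (∫ p in T, (v p) ^ 2 * φ p) } 5 ∧
    (∫ p in T, u p * φ p) = 0 ∧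
    (∀ p ∈ T,
      -(deriv (deriv (fun x => u (x, p.2))) p.1 +
          deriv (deriv (fun y => u (p.1, y))) p.2) +
        (p.1 * deriv (fun x => u (x, p.2)) p.1 +
          p.2 * deriv (fun y => u (p.1, y)) p.2) = 5 * u p) ∧
    (∀ y : ℝ, deriv (fun x => u (x, y)) α = 0 ∧ deriv (fun x => u (x, y)) β = 0) ∧
    (∀ x y : ℝ, deriv (fun y' => u (x, y')) y = 0) := by
  have hT' : T = II ×ˢ II := by rw [hT, hα, hβ]; rfl
  have hπ : ((2:ℝ) * Real.pi)⁻¹ ≠ 0 := by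
    have := Real.pi_pos; positivity
  have hπpos : 0 < ((2:ℝ) * Real.pi)⁻¹ := by
    have := Real.pi_pos; positivity
  have hφW : ∀ p : ℝ × ℝ, φ p = (2 * Real.pi)⁻¹ * WW p := by
    intro p
    rw [hφ]
    congr 1
    simp only [WW, rr]
    rw [← Real.exp_add]
    congr 1
    ring
  have hconv : ∀ f : ℝ × ℝ → ℝ, (∫ p in II ×ˢ II, f p * φ p)
      = (2 * Real.pi)⁻¹ * ∫ p in II ×ˢ II, f p * WW p := by
    intro f
    rw [← MeasureTheory.integral_const_mul]
    apply MeasureTheory.integral_congr_ae (ae_of_all _ _)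
    intro p
    rw [hφW p]; ring
  have hueq : ∀ p : ℝ × ℝ, u p = g5 p.1 := fun p => hu p
  have huX : ∀ b : ℝ, (fun x => u (x, b)) = g5 := fun b => funext fun x => hueq (x, b)
  have huY : ∀ a : ℝ, (fun y => u (a, y)) = fun _ => g5 a := fun a => funext fun y => hueq (a, y)
  have hcu : ContDiff ℝ 1 u := by
    have : u = fun p : ℝ × ℝ => g5 p.1 := funext hueq
    rw [this]
    exact contDiff_g5.comp contDiff_fst
  -- integrals of u
  have hu_mean : (∫ p in II ×ˢ II, u p * φ p) = 0 := by
    rw [hconv u]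
    have he : (fun p : ℝ × ℝ => u p * WW p) =
        fun p : ℝ × ℝ => (g5 p.1 * rr p.1) * rr p.2 := by
      funext p; rw [hueq p]; simp only [WW]; ring
    rw [he, sep (fun x => g5 x * rr x) rr, int_g5_rr_II, zero_mul, mul_zero]
  have hu_den : (∫ p in II ×ˢ II, (u p)^2 * φ p)
      = (2 * Real.pi)⁻¹ * ((∫ x in II, (g5 x)^2 * rr x) * (∫ x in II, rr x)) := by
    rw [hconv (fun p => (u p)^2)]
    congr 1
    have he : (fun p : ℝ × ℝ => (u p)^2 * WW p) =
        fun p : ℝ × ℝ => ((g5 p.1)^2 * rr p.1) * rr p.2 := by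
      funext p; rw [hueq p]; simp only [WW]; ring
    rw [he, sep (fun x => (g5 x)^2 * rr x) rr]
  have hden_pos : 0 < ∫ p in II ×ˢ II, (u p)^2 * φ p := by
    rw [hu_den]
    exact mul_pos hπpos (mul_pos A2_pos CI_pos)
  have hu_num : (∫ p in II ×ˢ II, ((deriv (fun x => u (x, p.2)) p.1)^2 +
      (deriv (fun y => u (p.1, y)) p.2)^2) * φ p)
      = (2 * Real.pi)⁻¹ * ((5 * ∫ x in II, (g5 x)^2 * rr x) * (∫ x in II, rr x)) := by
    rw [hconv (fun p => (deriv (fun x => u (x, p.2)) p.1)^2 +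
      (deriv (fun y => u (p.1, y)) p.2)^2)]
    congr 1
    have he : (fun p : ℝ × ℝ => ((deriv (fun x => u (x, p.2)) p.1)^2 +
        (deriv (fun y => u (p.1, y)) p.2)^2) * WW p) =
        fun p : ℝ × ℝ => ((g5p p.1)^2 * rr p.1) * rr p.2 := by
      funext p
      rw [huX p.2, huY p.1, deriv_g5_eq, deriv_const']
      simp only [WW]
      ring
    rw [he, sep (fun x => (g5p x)^2 * rr x) rr, int_g5p_sq_II]
  rw [hT']
  refine ⟨⟨?_, ?_⟩, hu_mean, ?_, ?_, ?_⟩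
  · -- membership : u attains the value 5
    refine ⟨u, hcu, hu_mean, ne_of_gt hden_pos, ?_⟩
    rw [hu_num, hu_den, mul_div_mul_left _ _ hπ]
    rw [mul_assoc, mul_div_assoc]
    rw [div_self (ne_of_gt (mul_pos A2_pos CI_pos))]
    ring
  · -- lower bound
    rintro q ⟨v, hv1, hv2, hv3, rfl⟩
    have hm : (∫ p in II ×ˢ II, v p * WW p) = 0 := by
      rw [hconv v] at hv2
      exact (mul_eq_zero.mp hv2).resolve_left hπ
    have hD : (∫ p in II ×ˢ II, (v p)^2 * WW p) ≠ 0 := by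
      intro h0
      exact hv3 (by rw [hconv (fun p => (v p)^2), h0, mul_zero])
    have hDpos : 0 < ∫ p in II ×ˢ II, (v p)^2 * WW p := by
      rcases lt_or_eq_of_le (setIntegral_nonneg (measurableSet_Ioo.prod measurableSet_Ioo)
        (fun p _ => mul_nonneg (sq_nonneg _)
          (mul_nonneg (rr_pos p.1).le (rr_pos p.2).le))) with h | h
      · exact h
      · exact absurd h.symm hD
    have hmain := lower2D hv1 hm
    rw [hconv (fun p => (deriv (fun x => v (x, p.2)) p.1)^2 +
      (deriv (fun y => v (p.1, y)) p.2)^2), hconv (fun p => (v p)^2),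
      mul_div_mul_left _ _ hπ, le_div_iff₀ hDpos]
    linarith
  · -- PDE
    intro p _
    rw [huX p.2, huY p.1, hueq p, deriv_g5_eq, deriv_const']
    have h0 : deriv (fun _ : ℝ => (0:ℝ)) p.2 = 0 := deriv_const _ _
    rw [h0, (hasDerivAt_g5p p.1).deriv]
    rw [eigen_id p.1]
    ring
  · -- Neumann in x
    intro y
    rw [hα, hβ]
    constructor
    · rw [huX y, deriv_g5_eq]
      exact g5p_aa
    · rw [huX y, deriv_g5_eq]
      exact g5p_bb
  · -- y-derivative vanishes
    intro x y
    rw [huY x, deriv_const']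
end
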